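/- arXiv:1206.3219 — 5 statements merged into one kernel-verified Lean document; each statement's English description precedes it below -/
import Mathlib

section
/- In the definition of the generalized Wasserstein distance, the infimum is unchanged when restricted to pairs of submeasures of μ and ν: W^{a,b}_p(μ,ν) = inf { a|μ−μ̃| + a|ν−ν̃| + b W_p(μ̃,ν̃) : μ̃, ν̃ ∈ M^p, |μ̃| = |ν̃|, μ̃ ≤ μ, ν̃ ≤ ν }, where μ̃ ≤ μ means μ̃(A) ≤ μ(A) for every Borel set A. -/
open MeasureTheory ENNReal Filter Topology

noncomputable section

/-- `ℝ^d` as a Euclidean space. -/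
abbrev Euc (d : ℕ) := EuclideanSpace ℝ (Fin d)

variable {E : Type*} [NormedAddCommGroup E] [MeasurableSpace E]

/-- Total mass `|μ| = μ(ℝ^d)` of a nonnegative measure, as a real number. -/
def mass (μ : Measure E) : ℝ := (μ Set.univ).toReal

/-- Total variation norm `|μ - ν|` of the difference of two nonnegative finite
measures, computed via the Jordan decomposition `(μ - ν) + (ν - μ)`. -/
def tvDist (μ ν : Measure E) : ℝ := ((μ - ν) Set.univ + (ν - μ) Set.univ).toReal

/-- `μ` has finite `p`-th moment. -/
def FinMom (p : ℝ) (μ : Measure E) : Prop :=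
  ∫⁻ x, ENNReal.ofReal (‖x‖ ^ p) ∂μ < ⊤

/-- `π` is a transference plan from `μ` to `ν`: its first and second marginals
are `μ` and `ν` respectively. -/
def IsPlan (π : Measure (E × E)) (μ ν : Measure E) : Prop :=
  π.map Prod.fst = μ ∧ π.map Prod.snd = ν

/-- Transportation cost `∫ |x - y|^p dπ(x,y)` of a plan `π`. -/
def Wcost (p : ℝ) (π : Measure (E × E)) : ℝ≥0∞ :=
  ∫⁻ z, ENNReal.ofReal (dist z.1 z.2 ^ p) ∂π

/-- The Wasserstein distance `W_p(μ,ν) = (inf_π ∫ |x-y|^p dπ)^{1/p}`. -/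
def Wp (p : ℝ) (μ ν : Measure E) : ℝ :=
  ((sInf (Wcost p '' {π | IsPlan π μ ν})) ^ (1 / p)).toReal

/-- The set of admissible values `a|μ-μ̃| + a|ν-ν̃| + b W_p(μ̃,ν̃)` over all
`μ̃, ν̃ ∈ M^p` with `|μ̃| = |ν̃|`. -/
def gwSet (a b p : ℝ) (μ ν : Measure E) : Set ℝ :=
  { r | ∃ μ' ν' : Measure E, IsFiniteMeasure μ' ∧ IsFiniteMeasure ν' ∧
      FinMom p μ' ∧ FinMom p ν' ∧ μ' Set.univ = ν' Set.univ ∧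
      r = a * tvDist μ μ' + a * tvDist ν ν' + b * Wp p μ' ν' }

/-- The generalized Wasserstein distance `W^{a,b}_p`. -/
def GW (a b p : ℝ) (μ ν : Measure E) : ℝ := sInf (gwSet a b p μ ν)

/-- The support of a measure: the set of points all of whose open neighbourhoods
have positive measure. -/
def msupp (μ : Measure E) : Set E := {x : E | ∀ U : Set E, IsOpen U → x ∈ U → μ U ≠ 0}

/-- Weak convergence of a sequence of measures: convergence of integrals of all
bounded continuous functions. -/
def WeakConv {F : Type*} [MeasurableSpace F] [TopologicalSpace F]
    (μs : ℕ → Measure F) (μ : Measure F) : Prop :=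
  ∀ f : F → ℝ, Continuous f → (∃ C : ℝ, ∀ x, |f x| ≤ C) →
    Tendsto (fun n => ∫ x, f x ∂(μs n)) atTop (𝓝 (∫ x, f x ∂μ))

/-- A family of measures is tight if for every `ε > 0` there is a compact set
whose complement has measure less than `ε` for all members of the family. -/
def Tight (F : Set (Measure E)) : Prop :=
  ∀ ε : ℝ, 0 < ε → ∃ K : Set E, IsCompact K ∧ ∀ μ ∈ F, μ Kᶜ < ENNReal.ofReal ε

end

noncomputable section HelpersTest

variable {α β : Type*} [MeasurableSpace α] [MeasurableSpace β]

lemma restrict_le_restrict_of_forall {μ ν : Measure α} {u : Set α} (hu : MeasurableSet u)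
    (h : ∀ t, MeasurableSet t → t ⊆ u → ν t ≤ μ t) : ν.restrict u ≤ μ.restrict u := by
  rw [Measure.le_iff]
  intro s hs
  rw [Measure.restrict_apply hs, Measure.restrict_apply hs]
  exact h _ (hs.inter hu) Set.inter_subset_right

lemma sub_apply_add_of_restrict_le {μ ν : Measure α} [IsFiniteMeasure μ] [IsFiniteMeasure ν]
    {u : Set α} (hu : MeasurableSet u) (h : ν.restrict u ≤ μ.restrict u)
    {E : Set α} (hE : MeasurableSet E) (hEu : E ⊆ u) :
    (μ - ν) E + ν E = μ E := by
  have h1 : (μ - ν) E = (μ - ν).restrict u E := by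
    rw [Measure.restrict_apply hE, Set.inter_eq_self_of_subset_left hEu]
  have hle : ν E ≤ μ E := by
    have := Measure.le_iff'.mp h E
    rwa [Measure.restrict_apply hE, Measure.restrict_apply hE,
      Set.inter_eq_self_of_subset_left hEu] at this
  rw [h1, Measure.restrict_sub_eq_restrict_sub_restrict hu, Measure.sub_apply hE h,
    Measure.restrict_apply hE, Measure.restrict_apply hE,
    Set.inter_eq_self_of_subset_left hEu]
  exact tsub_add_cancel_of_le hle

lemma hahn_sub_mass {μ ν : Measure α} [IsFiniteMeasure μ] [IsFiniteMeasure ν] {s : Set α}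
    (hs : MeasurableSet s) (h1 : ∀ t, MeasurableSet t → t ⊆ s → ν t ≤ μ t)
    (h2 : ∀ t, MeasurableSet t → t ⊆ sᶜ → μ t ≤ ν t) :
    (μ - ν) Set.univ + ν s = μ s := by
  have h0 : (μ - ν) sᶜ = 0 :=
    Measure.sub_apply_eq_zero_of_restrict_le_restrict
      (restrict_le_restrict_of_forall hs.compl h2) hs.compl
  have huniv : (μ - ν) Set.univ = (μ - ν) s := by
    rw [← measure_add_measure_compl hs, h0, add_zero]
  rw [huniv]
  exact sub_apply_add_of_restrict_le hs (restrict_le_restrict_of_forall hs h1) hs subset_rfl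

lemma le_sub_add_of_finite {μ ν : Measure α} [IsFiniteMeasure μ] [IsFiniteMeasure ν] :
    μ ≤ μ - ν + ν := by
  obtain ⟨u, hu, h1, h2⟩ := hahn_decomposition (μ := μ) (ν := ν)
  rw [Measure.le_iff]
  intro E hE
  have hEu : MeasurableSet (E ∩ u) := hE.inter hu
  have key : μ (E ∩ u) = (μ - ν) (E ∩ u) + ν (E ∩ u) :=
    (sub_apply_add_of_restrict_le hu (restrict_le_restrict_of_forall hu h1) hEu
      Set.inter_subset_right).symm
  calc μ E = μ (E ∩ u) + μ (E \ u) := (measure_inter_add_diff E hu).symm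
    _ ≤ ((μ - ν) (E ∩ u) + ν (E ∩ u)) + ν (E \ u) := by
        rw [key]
        exact add_le_add le_rfl (h2 _ (hE.diff hu) (Set.diff_subset_compl E u))
    _ ≤ (μ - ν) E + (ν (E ∩ u) + ν (E \ u)) := by
        rw [add_assoc]
        gcongr
        exact Set.inter_subset_left
    _ = (μ - ν) E + ν E := by
        congr 1
        exact measure_inter_add_diff E hu
    _ = ((μ - ν) + ν) E := (Measure.add_apply _ _ _).symm

lemma exists_le_map_eq (π : Measure α) [IsFiniteMeasure π] {g : α → β} (hg : Measurable g)
    {τ : Measure β} [IsFiniteMeasure τ] (hτ : τ ≤ π.map g) :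
    ∃ π' : Measure α, π' ≤ π ∧ π'.map g = τ := by
  set ρ := π.map g with hρ
  haveI : IsFiniteMeasure ρ := by
    constructor
    rw [hρ, Measure.map_apply hg MeasurableSet.univ]
    exact measure_lt_top π _
  set f := τ.rnDeriv ρ with hfdef
  have hf : Measurable f := Measure.measurable_rnDeriv τ ρ
  have hwd : ρ.withDensity f = τ :=
    Measure.withDensity_rnDeriv_eq τ ρ (Measure.absolutelyContinuous_of_le hτ)
  have hle1 : f ≤ᵐ[ρ] 1 := Measure.rnDeriv_le_one_of_le hτ
  have hle1' : (fun x => f (g x)) ≤ᵐ[π] 1 := by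
    have hms : MeasurableSet {y | f y ≤ (1 : ℝ≥0∞)} := measurableSet_le hf measurable_const
    exact (ae_map_iff hg.aemeasurable hms).mp hle1
  refine ⟨π.withDensity (fun x => f (g x)), ?_, ?_⟩
  · calc π.withDensity (fun x => f (g x)) ≤ π.withDensity 1 := withDensity_mono hle1'
      _ = π := withDensity_one
  · ext E hE
    rw [Measure.map_apply hg hE, withDensity_apply _ (hg hE), ← hwd, withDensity_apply _ hE,
      setLIntegral_map hE hf hg]

end HelpersTest

open MeasureTheory ENNReal Filter Topology

noncomputable section Part2

variable {α β : Type*} [MeasurableSpace α] [MeasurableSpace β]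

lemma exists_plan' (μ' ν' : Measure α) [IsFiniteMeasure μ'] [IsFiniteMeasure ν']
    (h : μ' Set.univ = ν' Set.univ) :
    ∃ π : Measure (α × α), π.map Prod.fst = μ' ∧ π.map Prod.snd = ν' := by
  by_cases h0 : μ' Set.univ = 0
  · have hμ0 : μ' = 0 := Measure.measure_univ_eq_zero.mp h0
    have hν0 : ν' = 0 := Measure.measure_univ_eq_zero.mp (h ▸ h0)
    exact ⟨0, by simp [hμ0], by simp [hν0]⟩
  · refine ⟨(μ' Set.univ)⁻¹ • (μ'.prod ν'), ?_, ?_⟩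
    · rw [Measure.map_smul, Measure.map_fst_prod, ← h, smul_smul,
        ENNReal.inv_mul_cancel h0 (measure_ne_top _ _), one_smul]
    · rw [Measure.map_smul, Measure.map_snd_prod, smul_smul,
        ENNReal.inv_mul_cancel h0 (measure_ne_top _ _), one_smul]

variable {E : Type*} [NormedAddCommGroup E] [MeasurableSpace E] [BorelSpace E]

lemma wcost_ne_top' {p : ℝ} (hp : 1 ≤ p) {π : Measure (E × E)} {μ' ν' : Measure E}
    (h1f : π.map Prod.fst = μ') (h2f : π.map Prod.snd = ν')
    (h1 : ∫⁻ x, ENNReal.ofReal (‖x‖ ^ p) ∂μ' < ⊤)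
    (h2 : ∫⁻ x, ENNReal.ofReal (‖x‖ ^ p) ∂ν' < ⊤) :
    ∫⁻ z, ENNReal.ofReal (dist z.1 z.2 ^ p) ∂π ≠ ⊤ := by
  have hp0 : (0:ℝ) ≤ p := by linarith
  set g : E → ℝ≥0∞ := fun x => ENNReal.ofReal (2 ^ p * ‖x‖ ^ p) with hg
  have hgm : Measurable g := ((measurable_norm.pow measurable_const).const_mul _).ennreal_ofReal
  have hpt : ∀ z : E × E, ENNReal.ofReal (dist z.1 z.2 ^ p) ≤ g z.1 + g z.2 := by
    intro z
    have hd : dist z.1 z.2 ≤ ‖z.1‖ + ‖z.2‖ := by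
      rw [dist_eq_norm]; exact norm_sub_le _ _
    have h1' : dist z.1 z.2 ^ p ≤ (‖z.1‖ + ‖z.2‖) ^ p :=
      Real.rpow_le_rpow dist_nonneg hd hp0
    have h2' : (‖z.1‖ + ‖z.2‖ : ℝ) ^ p ≤ 2 ^ p * ‖z.1‖ ^ p + 2 ^ p * ‖z.2‖ ^ p := by
      have hmn : (0:ℝ) ≤ max ‖z.1‖ ‖z.2‖ := le_trans (norm_nonneg _) (le_max_left _ _)
      have hmax : (‖z.1‖ + ‖z.2‖ : ℝ) ≤ 2 * max ‖z.1‖ ‖z.2‖ := by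
        rw [two_mul]
        exact add_le_add (le_max_left _ _) (le_max_right _ _)
      have hstep : (‖z.1‖ + ‖z.2‖ : ℝ) ^ p ≤ (2 * max ‖z.1‖ ‖z.2‖) ^ p :=
        Real.rpow_le_rpow (by positivity) hmax hp0
      have hm2 : (2 * max ‖z.1‖ ‖z.2‖ : ℝ) ^ p = 2 ^ p * (max ‖z.1‖ ‖z.2‖) ^ p :=
        Real.mul_rpow (by norm_num) hmn
      have hmp : (max ‖z.1‖ ‖z.2‖ : ℝ) ^ p ≤ ‖z.1‖ ^ p + ‖z.2‖ ^ p := by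
        rcases max_cases ‖z.1‖ ‖z.2‖ with ⟨hEq, _⟩ | ⟨hEq, _⟩ <;> rw [hEq]
        · nlinarith [Real.rpow_nonneg (norm_nonneg z.2) p]
        · nlinarith [Real.rpow_nonneg (norm_nonneg z.1) p]
      have h2pos : (0:ℝ) ≤ 2 ^ p := Real.rpow_nonneg (by norm_num) p
      calc (‖z.1‖ + ‖z.2‖ : ℝ) ^ p ≤ 2 ^ p * (max ‖z.1‖ ‖z.2‖) ^ p := by rw [← hm2]; exact hstep
        _ ≤ 2 ^ p * (‖z.1‖ ^ p + ‖z.2‖ ^ p) := by nlinarith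
        _ = 2 ^ p * ‖z.1‖ ^ p + 2 ^ p * ‖z.2‖ ^ p := by ring
    calc ENNReal.ofReal (dist z.1 z.2 ^ p)
        ≤ ENNReal.ofReal (2 ^ p * ‖z.1‖ ^ p + 2 ^ p * ‖z.2‖ ^ p) :=
          ENNReal.ofReal_le_ofReal (le_trans h1' h2')
      _ = g z.1 + g z.2 := ENNReal.ofReal_add (by positivity) (by positivity)
  have hbound : ∫⁻ z, ENNReal.ofReal (dist z.1 z.2 ^ p) ∂π
      ≤ ∫⁻ z, g z.1 ∂π + ∫⁻ z, g z.2 ∂π := by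
    calc ∫⁻ z, ENNReal.ofReal (dist z.1 z.2 ^ p) ∂π ≤ ∫⁻ z, (g z.1 + g z.2) ∂π :=
          lintegral_mono hpt
      _ = _ := lintegral_add_left (hgm.comp measurable_fst) _
  have hfst : ∫⁻ z : E × E, g z.1 ∂π = ∫⁻ x, g x ∂μ' := by
    rw [← h1f, lintegral_map hgm measurable_fst]
  have hsnd : ∫⁻ z : E × E, g z.2 ∂π = ∫⁻ x, g x ∂ν' := by
    rw [← h2f, lintegral_map hgm measurable_snd]
  have hg' : ∀ κ : Measure E, ∫⁻ x, g x ∂κ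
      = ENNReal.ofReal (2 ^ p) * ∫⁻ x, ENNReal.ofReal (‖x‖ ^ p) ∂κ := by
    intro κ
    rw [← lintegral_const_mul _ ((measurable_norm.pow measurable_const).ennreal_ofReal)]
    congr 1
    funext x
    rw [← ENNReal.ofReal_mul (by positivity)]
  have hfin : ∫⁻ z, g z.1 ∂π + ∫⁻ z, g z.2 ∂π < ⊤ := by
    rw [hfst, hsnd, hg' μ', hg' ν']
    exact ENNReal.add_lt_top.mpr
      ⟨ENNReal.mul_lt_top ENNReal.ofReal_lt_top h1, ENNReal.mul_lt_top ENNReal.ofReal_lt_top h2⟩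
  exact (lt_of_le_of_lt hbound hfin).ne

end Part2


theorem gw_inf_restricted_to_submeasures {d : ℕ} (hd : 1 ≤ d) (a b p : ℝ) (hp : 1 ≤ p) (ha : 0 < a) (hb : 0 < b)
    (μ ν : Measure (Euc d)) [IsFiniteMeasure μ] [IsFiniteMeasure ν] :
    GW a b p μ ν = sInf { r : ℝ | ∃ μ' ν' : Measure (Euc d),
      IsFiniteMeasure μ' ∧ IsFiniteMeasure ν' ∧ FinMom p μ' ∧ FinMom p ν' ∧
      μ' Set.univ = ν' Set.univ ∧ μ' ≤ μ ∧ ν' ≤ ν ∧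
      r = a * tvDist μ μ' + a * tvDist ν ν' + b * Wp p μ' ν' } := by

  classical
  set R := { r : ℝ | ∃ μ' ν' : Measure (Euc d),
      IsFiniteMeasure μ' ∧ IsFiniteMeasure ν' ∧ FinMom p μ' ∧ FinMom p ν' ∧
      μ' Set.univ = ν' Set.univ ∧ μ' ≤ μ ∧ ν' ≤ ν ∧
      r = a * tvDist μ μ' + a * tvDist ν ν' + b * Wp p μ' ν' } with hRdef
  have hp0 : (0:ℝ) < p := by linarith
  have hRsubG : R ⊆ gwSet a b p μ ν := by
    rintro r ⟨μ', ν', h1, h2, h3, h4, h5, -, -, h8⟩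
    exact ⟨μ', ν', h1, h2, h3, h4, h5, h8⟩
  have hRne : R.Nonempty := by
    refine ⟨a * tvDist μ 0 + a * tvDist ν 0 + b * Wp p 0 0,
      0, 0, inferInstance, inferInstance, ?_, ?_, rfl, Measure.zero_le _, Measure.zero_le _, rfl⟩ <;>
    · show (∫⁻ x, ENNReal.ofReal (‖x‖ ^ p) ∂(0 : Measure (Euc d))) < ⊤
      simp
  have hGbdd : BddBelow (gwSet a b p μ ν) := by
    refine ⟨0, fun r hr => ?_⟩
    obtain ⟨μ', ν', -, -, -, -, -, hr⟩ := hr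
    have h1 : 0 ≤ tvDist μ μ' := ENNReal.toReal_nonneg
    have h2 : 0 ≤ tvDist ν ν' := ENNReal.toReal_nonneg
    have h3 : 0 ≤ Wp p μ' ν' := ENNReal.toReal_nonneg
    rw [hr]
    have := mul_nonneg ha.le h1
    have := mul_nonneg ha.le h2
    have := mul_nonneg hb.le h3
    linarith
  have key : ∀ r ∈ gwSet a b p μ ν, ∀ ε : ℝ, 0 < ε → ∃ u ∈ R, u ≤ r + ε := by
    rintro r ⟨μ', ν', hfμ', hfν', hmomμ', hmomν', hmass, rfl⟩ ε hε
    haveI := hfμ'; haveI := hfν'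
    have hmomμ'' : ∫⁻ x, ENNReal.ofReal (‖x‖ ^ p) ∂μ' < ⊤ := hmomμ'
    have hmomν'' : ∫⁻ x, ENNReal.ofReal (‖x‖ ^ p) ∂ν' < ⊤ := hmomν'
    -- a near-optimal transference plan
    set c := sInf (Wcost p '' {π : Measure (Euc d × Euc d) | IsPlan π μ' ν'}) with hc
    obtain ⟨π₀, hπ₀1, hπ₀2⟩ := exists_plan' μ' ν' hmass
    have hπ₀cost : Wcost p π₀ ≠ ⊤ := wcost_ne_top' hp hπ₀1 hπ₀2 hmomμ'' hmomν''
    have hcne : c ≠ ⊤ := by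
      intro htop
      exact hπ₀cost (top_le_iff.mp (htop ▸ sInf_le ⟨π₀, ⟨hπ₀1, hπ₀2⟩, rfl⟩))
    set εb := ε / b with hεb
    have hεb0 : 0 < εb := div_pos hε hb
    set δ := (ENNReal.ofReal εb) ^ p with hδ
    have hδ0 : δ ≠ 0 :=
      (ENNReal.rpow_pos (ENNReal.ofReal_pos.mpr hεb0) ENNReal.ofReal_ne_top).ne'
    have hδtop : δ ≠ ⊤ := by
      rw [hδ]
      exact (ENNReal.rpow_lt_top_of_nonneg hp0.le ENNReal.ofReal_ne_top).ne
    have hlt : c < c + δ := ENNReal.lt_add_right hcne hδ0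
    rw [hc] at hlt
    obtain ⟨w, hwmem, hwlt⟩ := sInf_lt_iff.mp hlt
    rw [← hc] at hwlt
    obtain ⟨π, hπplan, hπeq⟩ := hwmem
    rw [← hπeq] at hwlt
    have hπuniv : π Set.univ = μ' Set.univ := by
      rw [← hπplan.1, Measure.map_apply measurable_fst MeasurableSet.univ, Set.preimage_univ]
    haveI hπfin : IsFiniteMeasure π := ⟨by rw [hπuniv]; exact measure_lt_top μ' _⟩
    -- Step 1: Hahn decomposition of (μ, μ') and trimming of the first marginal
    obtain ⟨s, hs, hs1, hs2⟩ := hahn_decomposition (μ := μ) (ν := μ')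
    set μh : Measure (Euc d) := μ'.restrict s + μ.restrict sᶜ with hμh
    haveI : IsFiniteMeasure μh := by rw [hμh]; infer_instance
    have hμhA : ∀ A : Set (Euc d), MeasurableSet A → μh A = μ' (A ∩ s) + μ (A ∩ sᶜ) := by
      intro A hA
      rw [hμh, Measure.add_apply, Measure.restrict_apply hA, Measure.restrict_apply hA]
    have hμh_le_μ : μh ≤ μ := by
      rw [Measure.le_iff]
      intro A hA
      rw [hμhA A hA]
      calc μ' (A ∩ s) + μ (A ∩ sᶜ) ≤ μ (A ∩ s) + μ (A ∩ sᶜ) :=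
            add_le_add (hs1 (A ∩ s) (hA.inter hs) Set.inter_subset_right) le_rfl
        _ = μ A := by rw [← Set.diff_eq, measure_inter_add_diff A hs]
    have hμh_le_μ' : μh ≤ μ' := by
      rw [Measure.le_iff]
      intro A hA
      rw [hμhA A hA]
      calc μ' (A ∩ s) + μ (A ∩ sᶜ) ≤ μ' (A ∩ s) + μ' (A ∩ sᶜ) :=
            add_le_add le_rfl (hs2 (A ∩ sᶜ) (hA.inter hs.compl) Set.inter_subset_right)
        _ = μ' A := by rw [← Set.diff_eq, measure_inter_add_diff A hs]
    have hμh_le_map : μh ≤ π.map Prod.fst := by rw [hπplan.1]; exact hμh_le_μ'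
    obtain ⟨πh, hπh_le, hπh_fst⟩ := exists_le_map_eq π measurable_fst hμh_le_map
    haveI : IsFiniteMeasure πh := isFiniteMeasure_of_le π hπh_le
    set ν1 : Measure (Euc d) := πh.map Prod.snd with hν1
    have hν1_le_ν' : ν1 ≤ ν' := by
      rw [hν1, ← hπplan.2]
      exact Measure.map_mono hπh_le measurable_snd
    haveI : IsFiniteMeasure ν1 := isFiniteMeasure_of_le ν' hν1_le_ν'
    -- Step 2: Hahn decomposition of (ν1, ν) and trimming of the second marginal
    obtain ⟨t, ht, ht1, ht2⟩ := hahn_decomposition (μ := ν1) (ν := ν)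
    set νt : Measure (Euc d) := ν.restrict t + ν1.restrict tᶜ with hνt
    haveI : IsFiniteMeasure νt := by rw [hνt]; infer_instance
    have hνtA : ∀ A : Set (Euc d), MeasurableSet A → νt A = ν (A ∩ t) + ν1 (A ∩ tᶜ) := by
      intro A hA
      rw [hνt, Measure.add_apply, Measure.restrict_apply hA, Measure.restrict_apply hA]
    have hνt_le_ν1 : νt ≤ ν1 := by
      rw [Measure.le_iff]
      intro A hA
      rw [hνtA A hA]
      calc ν (A ∩ t) + ν1 (A ∩ tᶜ) ≤ ν1 (A ∩ t) + ν1 (A ∩ tᶜ) :=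
            add_le_add (ht1 (A ∩ t) (hA.inter ht) Set.inter_subset_right) le_rfl
        _ = ν1 A := by rw [← Set.diff_eq, measure_inter_add_diff A ht]
    have hνt_le_ν : νt ≤ ν := by
      rw [Measure.le_iff]
      intro A hA
      rw [hνtA A hA]
      calc ν (A ∩ t) + ν1 (A ∩ tᶜ) ≤ ν (A ∩ t) + ν (A ∩ tᶜ) :=
            add_le_add le_rfl (ht2 (A ∩ tᶜ) (hA.inter ht.compl) Set.inter_subset_right)
        _ = ν A := by rw [← Set.diff_eq, measure_inter_add_diff A ht]
    have hνt_le_map : νt ≤ πh.map Prod.snd := by rw [← hν1]; exact hνt_le_ν1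
    obtain ⟨πt, hπt_le, hπt_snd⟩ := exists_le_map_eq πh measurable_snd hνt_le_map
    haveI : IsFiniteMeasure πt := isFiniteMeasure_of_le πh hπt_le
    set μt : Measure (Euc d) := πt.map Prod.fst with hμt
    have hμt_le_μh : μt ≤ μh := by
      rw [hμt, ← hπh_fst]
      exact Measure.map_mono hπt_le measurable_fst
    have hμt_le_μ : μt ≤ μ := hμt_le_μh.trans hμh_le_μ
    have hμt_le_μ' : μt ≤ μ' := hμt_le_μh.trans hμh_le_μ'
    haveI : IsFiniteMeasure μt := isFiniteMeasure_of_le μ hμt_le_μ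
    -- total masses
    have hmass_t : μt Set.univ = νt Set.univ := by
      rw [hμt, ← hπt_snd, Measure.map_apply measurable_fst MeasurableSet.univ,
        Measure.map_apply measurable_snd MeasurableSet.univ, Set.preimage_univ,
        Set.preimage_univ]
    have hmassh : μh Set.univ = ν1 Set.univ := by
      rw [← hπh_fst, hν1, Measure.map_apply measurable_fst MeasurableSet.univ,
        Measure.map_apply measurable_snd MeasurableSet.univ, Set.preimage_univ,
        Set.preimage_univ]
    -- mass bookkeeping in ℝ≥0∞
    have e1 : (μ - μ') Set.univ + μ' s = μ s := hahn_sub_mass hs hs1 hs2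
    have e2 : (μ' - μ) Set.univ + μ sᶜ = μ' sᶜ :=
      hahn_sub_mass hs.compl hs2 (fun u hu hsub => hs1 u hu (by rwa [compl_compl] at hsub))
    have e3 : (ν1 - ν) Set.univ + ν t = ν1 t := hahn_sub_mass ht ht1 ht2
    have e4 : (ν - ν1) Set.univ + ν1 tᶜ = ν tᶜ :=
      hahn_sub_mass ht.compl ht2 (fun u hu hsub => ht1 u hu (by rwa [compl_compl] at hsub))
    have hμhX : μh Set.univ = μ' s + μ sᶜ := by
      rw [hμhA Set.univ MeasurableSet.univ]
      simp only [Set.univ_inter]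
    have hνtX : νt Set.univ = ν t + ν1 tᶜ := by
      rw [hνtA Set.univ MeasurableSet.univ]
      simp only [Set.univ_inter]
    have hsplitμ : μ s + μ sᶜ = μ Set.univ := measure_add_measure_compl hs
    have hsplitμ' : μ' s + μ' sᶜ = μ' Set.univ := measure_add_measure_compl hs
    have hsplitν1 : ν1 t + ν1 tᶜ = ν1 Set.univ := measure_add_measure_compl ht
    have hsplitν : ν t + ν tᶜ = ν Set.univ := measure_add_measure_compl ht
    have hμX : μ Set.univ = (μ - μ') Set.univ + μh Set.univ := by
      rw [hμhX, ← hsplitμ, ← e1]; ring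
    have hμ'X : μ' Set.univ = (μ' - μ) Set.univ + μh Set.univ := by
      rw [hμhX, ← hsplitμ', ← e2]; ring
    have hν1X : ν1 Set.univ = (ν1 - ν) Set.univ + νt Set.univ := by
      rw [hνtX, ← hsplitν1, ← e3]; ring
    have hνX : ν Set.univ = (ν - ν1) Set.univ + νt Set.univ := by
      rw [hνtX, ← hsplitν, ← e4]; ring
    have hm : (ν' - ν1) Set.univ = (μ' - μ) Set.univ := by
      have h9 : (ν' - ν1) Set.univ + ν1 Set.univ = ν' Set.univ := by
        rw [Measure.sub_apply MeasurableSet.univ hν1_le_ν']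
        exact tsub_add_cancel_of_le (Measure.le_iff'.mp hν1_le_ν' _)
      have h10 : ν' Set.univ = (μ' - μ) Set.univ + ν1 Set.univ := by
        rw [← hmass, hμ'X, hmassh]
      rw [h10] at h9
      rw [add_comm ((ν' - ν1) Set.univ) _, add_comm ((μ' - μ) Set.univ) _] at h9
      exact (ENNReal.add_right_inj (measure_ne_top ν1 _)).mp h9
    have hD2 : (ν1 - ν) Set.univ ≤ (ν' - ν) Set.univ := by
      have hsub : ν1 - ν ≤ ν' - ν :=
        Measure.sub_le_of_le_add (hν1_le_ν'.trans le_sub_add_of_finite)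
      exact Measure.le_iff'.mp hsub _
    have hC2 : (ν - ν1) Set.univ ≤ (ν - ν') Set.univ + (μ' - μ) Set.univ := by
      have h1 : (ν' - ν1) + ν1 = ν' := Measure.sub_add_cancel_of_le hν1_le_ν'
      have h2 : ν ≤ ((ν - ν') + (ν' - ν1)) + ν1 := by
        rw [add_assoc, h1]
        exact le_sub_add_of_finite
      have hsub : ν - ν1 ≤ (ν - ν') + (ν' - ν1) := Measure.sub_le_of_le_add h2
      calc (ν - ν1) Set.univ ≤ ((ν - ν') + (ν' - ν1)) Set.univ := Measure.le_iff'.mp hsub _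
        _ = (ν - ν') Set.univ + (ν' - ν1) Set.univ := Measure.add_apply _ _ _
        _ = (ν - ν') Set.univ + (μ' - μ) Set.univ := by rw [hm]
    have hsub1 : (μ - μt) Set.univ = (μ - μ') Set.univ + (ν1 - ν) Set.univ := by
      rw [Measure.sub_apply MeasurableSet.univ hμt_le_μ, hμX, hmassh, hν1X, hmass_t,
        ← add_assoc]
      exact ENNReal.add_sub_cancel_right (measure_ne_top νt _)
    have hsub2 : (ν - νt) Set.univ = (ν - ν1) Set.univ := by
      rw [Measure.sub_apply MeasurableSet.univ hνt_le_ν, hνX]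
      exact ENNReal.add_sub_cancel_right (measure_ne_top νt _)
    have hkey : (μ - μt) Set.univ + (ν - νt) Set.univ
        ≤ ((μ - μ') Set.univ + (μ' - μ) Set.univ)
          + ((ν - ν') Set.univ + (ν' - ν) Set.univ) := by
      rw [hsub1, hsub2]
      calc (μ - μ') Set.univ + (ν1 - ν) Set.univ + (ν - ν1) Set.univ
          ≤ (μ - μ') Set.univ + (ν' - ν) Set.univ
            + ((ν - ν') Set.univ + (μ' - μ) Set.univ) :=
            add_le_add (add_le_add le_rfl hD2) hC2
        _ = ((μ - μ') Set.univ + (μ' - μ) Set.univ)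
            + ((ν - ν') Set.univ + (ν' - ν) Set.univ) := by ring
    -- total-variation comparison, in ℝ
    have htv1 : tvDist μ μt = ((μ - μt) Set.univ).toReal := by
      unfold tvDist
      rw [Measure.sub_eq_zero_of_le hμt_le_μ]
      simp
    have htv2 : tvDist ν νt = ((ν - νt) Set.univ).toReal := by
      unfold tvDist
      rw [Measure.sub_eq_zero_of_le hνt_le_ν]
      simp
    have hAB_ne : (μ - μ') Set.univ + (μ' - μ) Set.univ ≠ ⊤ :=
      ENNReal.add_ne_top.mpr ⟨measure_ne_top _ _, measure_ne_top _ _⟩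
    have hCD_ne : (ν - ν') Set.univ + (ν' - ν) Set.univ ≠ ⊤ :=
      ENNReal.add_ne_top.mpr ⟨measure_ne_top _ _, measure_ne_top _ _⟩
    have htvsum : tvDist μ μt + tvDist ν νt ≤ tvDist μ μ' + tvDist ν ν' := by
      rw [htv1, htv2, ← ENNReal.toReal_add (measure_ne_top _ _) (measure_ne_top _ _)]
      have h2 : tvDist μ μ' + tvDist ν ν'
          = (((μ - μ') Set.univ + (μ' - μ) Set.univ)
            + ((ν - ν') Set.univ + (ν' - ν) Set.univ)).toReal := by
        unfold tvDist
        rw [← ENNReal.toReal_add hAB_ne hCD_ne]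
      rw [h2]
      exact ENNReal.toReal_mono (ENNReal.add_ne_top.mpr ⟨hAB_ne, hCD_ne⟩) hkey
    -- Wasserstein comparison
    have hplan_t : IsPlan πt μt νt := ⟨hμt.symm, hπt_snd⟩
    have hcost_le : Wcost p πt ≤ Wcost p π := lintegral_mono' (hπt_le.trans hπh_le) le_rfl
    have hsInf_le : sInf (Wcost p '' {π' : Measure (Euc d × Euc d) | IsPlan π' μt νt})
        ≤ c + δ :=
      le_trans (le_trans (sInf_le ⟨πt, hplan_t, rfl⟩) hcost_le) hwlt.le
    have hcd_ne : c + δ ≠ ⊤ := ENNReal.add_ne_top.mpr ⟨hcne, hδtop⟩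
    have h1p0 : (0:ℝ) ≤ 1 / p := by positivity
    have hδp : δ ^ (1 / p) = ENNReal.ofReal εb := by
      rw [hδ, ← ENNReal.rpow_mul, mul_one_div, div_self hp0.ne', ENNReal.rpow_one]
    have hc_ne : c ^ (1 / p) ≠ ⊤ := ENNReal.rpow_ne_top_of_nonneg h1p0 hcne
    have hWle : Wp p μt νt ≤ Wp p μ' ν' + εb := by
      have h2 : (sInf (Wcost p '' {π' : Measure (Euc d × Euc d) | IsPlan π' μt νt})) ^ (1 / p)
          ≤ (c + δ) ^ (1 / p) := ENNReal.rpow_le_rpow hsInf_le h1p0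
      have h3 : (c + δ) ^ (1 / p) ≤ c ^ (1 / p) + ENNReal.ofReal εb := by
        rw [← hδp]
        exact ENNReal.rpow_add_le_add_rpow c δ h1p0 (by rw [div_le_one hp0]; exact hp)
      calc Wp p μt νt
          = ((sInf (Wcost p '' {π' : Measure (Euc d × Euc d) | IsPlan π' μt νt})) ^ (1 / p)).toReal := rfl
        _ ≤ ((c + δ) ^ (1 / p)).toReal :=
            ENNReal.toReal_mono (ENNReal.rpow_ne_top_of_nonneg h1p0 hcd_ne) h2
        _ ≤ (c ^ (1 / p) + ENNReal.ofReal εb).toReal :=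
            ENNReal.toReal_mono (ENNReal.add_ne_top.mpr ⟨hc_ne, ENNReal.ofReal_ne_top⟩) h3
        _ = (c ^ (1 / p)).toReal + εb := by
            rw [ENNReal.toReal_add hc_ne ENNReal.ofReal_ne_top,
              ENNReal.toReal_ofReal hεb0.le]
        _ = Wp p μ' ν' + εb := by unfold Wp; rw [hc]
    -- assemble
    refine ⟨a * tvDist μ μt + a * tvDist ν νt + b * Wp p μt νt,
      ⟨μt, νt, inferInstance, inferInstance, ?_, ?_, hmass_t, hμt_le_μ, hνt_le_ν, rfl⟩, ?_⟩
    · show (∫⁻ x, ENNReal.ofReal (‖x‖ ^ p) ∂μt) < ⊤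
      exact lt_of_le_of_lt (lintegral_mono' hμt_le_μ' le_rfl) hmomμ''
    · show (∫⁻ x, ENNReal.ofReal (‖x‖ ^ p) ∂νt) < ⊤
      exact lt_of_le_of_lt (lintegral_mono' (hνt_le_ν1.trans hν1_le_ν') le_rfl) hmomν''
    · have h1 := mul_le_mul_of_nonneg_left htvsum ha.le
      have h2 := mul_le_mul_of_nonneg_left hWle hb.le
      have h3 : b * εb = ε := by
        rw [hεb, mul_comm, div_mul_cancel₀ ε hb.ne']
      rw [mul_add] at h1
      rw [mul_add, h3] at h2
      rw [mul_add] at h1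
      linarith
  show sInf (gwSet a b p μ ν) = sInf R
  apply le_antisymm
  · exact csInf_le_csInf hGbdd hRne hRsubG
  · refine le_csInf (hRne.mono hRsubG) fun r hr => ?_
    refine le_of_forall_pos_le_add fun ε hε => ?_
    obtain ⟨u, huR, hu⟩ := key r hr ε hε
    exact le_trans (csInf_le (hGbdd.mono hRsubG) huR) hu
end

section
/- For every k ≥ 0 and all μ, ν ∈ M, the generalized Wasserstein distance satisfies W^{a,b}_p(kμ, kν) ≤ max{k^{1/p}, k} · W^{a,b}_p(μ, ν). -/
open MeasureTheory ENNReal Filter Topology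

section Aux

open MeasureTheory ENNReal
open scoped NNReal

variable {E : Type*} [NormedAddCommGroup E] [MeasurableSpace E]

lemma measure_le_sub_add (μ ν : Measure E) [IsFiniteMeasure μ] [IsFiniteMeasure ν] :
    μ ≤ (μ - ν) + ν := by
  obtain ⟨s, hs, hle, hge⟩ := MeasureTheory.hahn_decomposition (μ := μ) (ν := ν)
  rw [Measure.le_iff]
  intro t ht
  rw [Measure.add_apply]
  have hres : ν.restrict s ≤ μ.restrict s := by
    rw [Measure.le_iff]
    intro u hu
    rw [Measure.restrict_apply hu, Measure.restrict_apply hu]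
    exact hle _ (hu.inter hs) Set.inter_subset_right
  have hsub : (μ - ν) (t ∩ s) = μ (t ∩ s) - ν (t ∩ s) := by
    have h := Measure.sub_apply (μ := μ.restrict s) (ν := ν.restrict s) ht hres
    rw [← Measure.restrict_sub_eq_restrict_sub_restrict hs] at h
    simp only [Measure.restrict_apply ht] at h
    exact h
  have hν1 : ν (t ∩ s) ≤ μ (t ∩ s) := hle _ (ht.inter hs) Set.inter_subset_right
  have hμ2 : μ (t \ s) ≤ ν (t \ s) := hge _ (ht.diff hs) (fun x hx => hx.2)
  calc μ t = μ (t ∩ s) + μ (t \ s) := (measure_inter_add_diff t hs).symm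
    _ ≤ μ (t ∩ s) + ν (t \ s) := by gcongr
    _ = ((μ (t ∩ s) - ν (t ∩ s)) + ν (t ∩ s)) + ν (t \ s) := by
        rw [tsub_add_cancel_of_le hν1]
    _ = (μ - ν) (t ∩ s) + (ν (t ∩ s) + ν (t \ s)) := by rw [hsub]; ring
    _ = (μ - ν) (t ∩ s) + ν t := by rw [measure_inter_add_diff t hs]
    _ ≤ (μ - ν) t + ν t := add_le_add (measure_mono Set.inter_subset_left) le_rfl

lemma nnreal_smul_measure_eq (k : ℝ≥0) (μ : Measure E) : k • μ = ((k : ℝ≥0∞)) • μ := by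
  ext u hu
  rw [Measure.smul_apply, Measure.smul_apply]
  rfl

lemma smul_measure_mono (k : ℝ≥0) {μ ν : Measure E} (h : μ ≤ ν) : k • μ ≤ k • ν := by
  rw [Measure.le_iff']
  intro u
  simp only [Measure.smul_apply, ENNReal.smul_def]
  exact mul_le_mul_right (Measure.le_iff'.1 h u) _

lemma smul_measure_sub (k : ℝ≥0) (hk : k ≠ 0) (μ ν : Measure E) [IsFiniteMeasure μ]
    [IsFiniteMeasure ν] : k • μ - k • ν = k • (μ - ν) := by
  apply le_antisymm
  · apply Measure.sub_le_of_le_add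
    calc k • μ ≤ k • ((μ - ν) + ν) := smul_measure_mono k (measure_le_sub_add μ ν)
      _ = k • (μ - ν) + k • ν := smul_add _ _ _
  · rw [Measure.sub_def]
    apply le_sInf
    intro d hd
    have h0 := smul_measure_mono k⁻¹ hd
    rw [smul_smul, inv_mul_cancel₀ hk, one_smul, smul_add, smul_smul,
      inv_mul_cancel₀ hk, one_smul] at h0
    have h2 : μ - ν ≤ k⁻¹ • d := Measure.sub_le_of_le_add h0
    have h3 := smul_measure_mono k h2
    rwa [smul_smul, mul_inv_cancel₀ hk, one_smul] at h3

lemma tvDist_smul (k : ℝ≥0) (hk : k ≠ 0) (μ ν : Measure E) [IsFiniteMeasure μ]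
    [IsFiniteMeasure ν] : tvDist (k • μ) (k • ν) = (k : ℝ) * tvDist μ ν := by
  rw [tvDist, tvDist, smul_measure_sub k hk, smul_measure_sub k hk]
  simp only [Measure.smul_apply, ENNReal.smul_def, smul_eq_mul]
  rw [← mul_add, ENNReal.toReal_mul, ENNReal.coe_toReal]

lemma finMom_smul (k : ℝ≥0) {p : ℝ} {μ : Measure E} (h : FinMom p μ) : FinMom p (k • μ) := by
  rw [FinMom] at h ⊢
  rw [nnreal_smul_measure_eq, lintegral_smul_measure]
  exact ENNReal.mul_lt_top ENNReal.coe_lt_top h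

lemma finMom_zero {p : ℝ} : FinMom p (0 : Measure E) := by simp [FinMom]

lemma wcost_smul (k : ℝ≥0) (p : ℝ) (π : Measure (E × E)) :
    Wcost p (k • π) = (k : ℝ≥0∞) * Wcost p π := by
  rw [Wcost, Wcost, nnreal_smul_measure_eq, lintegral_smul_measure]
  rfl

lemma isPlan_smul (k : ℝ≥0) {π : Measure (E × E)} {μ ν : Measure E} (h : IsPlan π μ ν) :
    IsPlan (k • π) (k • μ) (k • ν) := by
  obtain ⟨h1, h2⟩ := h
  exact ⟨by rw [Measure.map_smul, h1], by rw [Measure.map_smul, h2]⟩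

lemma wp_smul (k : ℝ≥0) (hk : k ≠ 0) {p : ℝ} (hp : 1 ≤ p) (μ ν : Measure E) :
    Wp p (k • μ) (k • ν) = (k : ℝ) ^ (1 / p) * Wp p μ ν := by
  have hk0 : (k : ℝ≥0∞) ≠ 0 := ENNReal.coe_ne_zero.2 hk
  have hkt : (k : ℝ≥0∞) ≠ ⊤ := ENNReal.coe_ne_top
  have hp0 : (0 : ℝ) < 1 / p := by positivity
  have hinv : k⁻¹ • (k • μ) = μ := by rw [smul_smul, inv_mul_cancel₀ hk, one_smul]
  have hinv' : k⁻¹ • (k • ν) = ν := by rw [smul_smul, inv_mul_cancel₀ hk, one_smul]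
  have himg : Wcost p '' {π | IsPlan π (k • μ) (k • ν)} =
      (fun x => (k : ℝ≥0∞) * x) '' (Wcost p '' {π | IsPlan π μ ν}) := by
    ext x
    constructor
    · rintro ⟨π, hπ, rfl⟩
      refine ⟨Wcost p (k⁻¹ • π), ⟨k⁻¹ • π, ?_, rfl⟩, ?_⟩
      · have := isPlan_smul k⁻¹ hπ
        rwa [hinv, hinv'] at this
      · show (k : ℝ≥0∞) * Wcost p (k⁻¹ • π) = Wcost p π
        rw [wcost_smul, ENNReal.coe_inv hk, ← mul_assoc,
          ENNReal.mul_inv_cancel hk0 hkt, one_mul]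
    · rintro ⟨_, ⟨π, hπ, rfl⟩, rfl⟩
      refine ⟨k • π, isPlan_smul k hπ, ?_⟩
      show Wcost p (k • π) = (k : ℝ≥0∞) * Wcost p π
      exact wcost_smul k p π
  have hinf : sInf (Wcost p '' {π | IsPlan π (k • μ) (k • ν)}) =
      (k : ℝ≥0∞) * sInf (Wcost p '' {π | IsPlan π μ ν}) := by
    rw [himg, sInf_image, sInf_eq_iInf]
    rw [ENNReal.mul_iInf_of_ne hk0 hkt]
    refine iInf_congr fun x => ?_
    rw [ENNReal.mul_iInf_of_ne hk0 hkt]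
  rw [Wp, Wp, hinf, ENNReal.mul_rpow_of_nonneg _ _ hp0.le, ENNReal.toReal_mul]
  congr 1
  rw [← ENNReal.coe_rpow_of_nonneg _ hp0.le, ENNReal.coe_toReal, NNReal.coe_rpow]

lemma wp_zero_zero {p : ℝ} (hp : 1 ≤ p) : Wp p (0 : Measure E) 0 = 0 := by
  have h0 : (0 : ℝ≥0∞) ∈ Wcost p '' {π | IsPlan π (0 : Measure E) 0} := by
    refine ⟨0, ⟨?_, ?_⟩, ?_⟩ <;> simp [Wcost, IsPlan]
  have hs : sInf (Wcost p '' {π | IsPlan π (0 : Measure E) 0}) = 0 :=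
    le_antisymm (sInf_le h0) zero_le
  rw [Wp, hs, ENNReal.zero_rpow_of_pos (by positivity), ENNReal.toReal_zero]

lemma tvDist_zero_zero : tvDist (0 : Measure E) 0 = 0 := by
  simp [tvDist]

lemma gwSet_nonneg {a b p : ℝ} (ha : 0 ≤ a) (hb : 0 ≤ b) {μ ν : Measure E} :
    ∀ r ∈ gwSet a b p μ ν, 0 ≤ r := by
  rintro r ⟨μ', ν', _, _, _, _, _, rfl⟩
  have h1 : 0 ≤ tvDist μ μ' := ENNReal.toReal_nonneg
  have h2 : 0 ≤ tvDist ν ν' := ENNReal.toReal_nonneg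
  have h3 : 0 ≤ Wp p μ' ν' := ENNReal.toReal_nonneg
  positivity

lemma gwSet_bddBelow {a b p : ℝ} (ha : 0 ≤ a) (hb : 0 ≤ b) {μ ν : Measure E} :
    BddBelow (gwSet a b p μ ν) :=
  ⟨0, fun _ hr => gwSet_nonneg ha hb _ hr⟩

lemma gwSet_nonempty {a b p : ℝ} {μ ν : Measure E} : (gwSet a b p μ ν).Nonempty :=
  ⟨_, 0, 0, inferInstance, inferInstance, finMom_zero, finMom_zero, rfl, rfl⟩

end Aux

theorem gw_smul_le {d : ℕ} (hd : 1 ≤ d) (a b p : ℝ) (hp : 1 ≤ p) (ha : 0 < a) (hb : 0 < b)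
    (μ ν : Measure (Euc d)) [IsFiniteMeasure μ] [IsFiniteMeasure ν] (k : NNReal) :
    GW a b p (k • μ) (k • ν) ≤ max ((k : ℝ) ^ (1 / p)) (k : ℝ) * GW a b p μ ν := by
  classical
  have hp0 : (0 : ℝ) < 1 / p := by positivity
  rcases eq_or_ne k 0 with rfl | hk
  · simp only [NNReal.coe_zero, Real.zero_rpow hp0.ne', max_self, zero_mul, zero_smul]
    have hmem : (0 : ℝ) ∈ gwSet a b p (0 : Measure (Euc d)) 0 := by
      refine ⟨0, 0, inferInstance, inferInstance, finMom_zero, finMom_zero, rfl, ?_⟩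
      rw [tvDist_zero_zero, wp_zero_zero hp]
      ring
    exact csInf_le (gwSet_bddBelow ha.le hb.le) hmem
  · set c : ℝ := max ((k : ℝ) ^ (1 / p)) (k : ℝ) with hc_def
    have hk0 : (0 : ℝ) < (k : ℝ) := NNReal.coe_pos.2 (pos_iff_ne_zero.2 hk)
    have hc : 0 < c := lt_of_lt_of_le hk0 (le_max_right _ _)
    have key : ∀ r ∈ gwSet a b p μ ν, GW a b p (k • μ) (k • ν) ≤ c * r := by
      rintro r ⟨μ', ν', h1, h2, h3, h4, h5, rfl⟩
      have hmem : a * tvDist (k • μ) (k • μ') + a * tvDist (k • ν) (k • ν') +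
          b * Wp p (k • μ') (k • ν') ∈ gwSet a b p (k • μ) (k • ν) := by
        refine ⟨k • μ', k • ν', inferInstance, inferInstance, finMom_smul k h3,
          finMom_smul k h4, ?_, rfl⟩
        simp only [Measure.smul_apply, h5]
      have hle : GW a b p (k • μ) (k • ν) ≤ a * tvDist (k • μ) (k • μ') +
          a * tvDist (k • ν) (k • ν') + b * Wp p (k • μ') (k • ν') :=
        csInf_le (gwSet_bddBelow ha.le hb.le) hmem
      refine hle.trans ?_
      rw [tvDist_smul k hk, tvDist_smul k hk, wp_smul k hk hp]
      have hkc : (k : ℝ) ≤ c := le_max_right _ _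
      have hkpc : (k : ℝ) ^ (1 / p) ≤ c := le_max_left _ _
      have t1 : 0 ≤ tvDist μ μ' := ENNReal.toReal_nonneg
      have t2 : 0 ≤ tvDist ν ν' := ENNReal.toReal_nonneg
      have w0 : 0 ≤ Wp p μ' ν' := ENNReal.toReal_nonneg
      nlinarith [mul_nonneg t1 (sub_nonneg.2 hkc), mul_nonneg t2 (sub_nonneg.2 hkc),
        mul_nonneg w0 (sub_nonneg.2 hkpc), ha.le, hb.le,
        mul_nonneg (mul_nonneg ha.le t1) (sub_nonneg.2 hkc),
        mul_nonneg (mul_nonneg ha.le t2) (sub_nonneg.2 hkc),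
        mul_nonneg (mul_nonneg hb.le w0) (sub_nonneg.2 hkpc)]
    have h1 : GW a b p (k • μ) (k • ν) / c ≤ GW a b p μ ν :=
      le_csInf gwSet_nonempty fun r hr => (div_le_iff₀ hc).2 (by rw [mul_comm]; exact key r hr)
    calc GW a b p (k • μ) (k • ν) = GW a b p (k • μ) (k • ν) / c * c :=
          (div_mul_cancel₀ _ hc.ne').symm
      _ ≤ GW a b p μ ν * c := mul_le_mul_of_nonneg_right h1 hc.le
      _ = c * GW a b p μ ν := mul_comm _ _
end

section
/- For all μ_1, μ_2, ν_1, ν_2 ∈ M, the generalized Wasserstein distance is subadditive: W^{a,b}_p(μ_1 + μ_2, ν_1 + ν_2) ≤ W^{a,b}_p(μ_1, ν_1) + W^{a,b}_p(μ_2, ν_2). -/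
open MeasureTheory ENNReal Filter Topology

noncomputable section
open Set
variable {α : Type*} [MeasurableSpace α]

/-- For finite measures, `μ ≤ (μ - ν) + ν`. -/
lemma my_le_sub_add (μ ν : Measure α) [IsFiniteMeasure μ] [IsFiniteMeasure ν] :
    μ ≤ (μ - ν) + ν := by
  obtain ⟨s, hs, h₁, h₂⟩ := hahn_decomposition (μ := μ) (ν := ν)
  have h_le : ν.restrict s ≤ μ.restrict s := by
    refine Measure.le_iff.2 fun t ht => ?_
    rw [Measure.restrict_apply ht, Measure.restrict_apply ht]
    exact h₁ _ (ht.inter hs) inter_subset_right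
  set d₀ : Measure α := μ.restrict s - ν.restrict s with hd₀
  have hd₀_apply : ∀ t, MeasurableSet t → d₀ t = μ (t ∩ s) - ν (t ∩ s) := by
    intro t ht
    rw [hd₀, Measure.sub_apply ht h_le, Measure.restrict_apply ht, Measure.restrict_apply ht]
  -- `d₀ ≤ μ - ν`
  have hA : d₀ ≤ μ - ν := by
    refine le_sInf fun d hd => Measure.le_iff.2 fun t ht => ?_
    rw [hd₀_apply t ht]
    refine tsub_le_iff_right.2 ?_
    calc μ (t ∩ s) ≤ (d + ν) (t ∩ s) := Measure.le_iff'.1 hd (t ∩ s)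
      _ = d (t ∩ s) + ν (t ∩ s) := rfl
      _ ≤ d t + ν (t ∩ s) := add_le_add (measure_mono inter_subset_left) le_rfl
  -- `μ ≤ d₀ + ν`
  have hB : μ ≤ d₀ + ν := by
    refine Measure.le_iff.2 fun t ht => ?_
    have hsplit : μ t = μ (t ∩ s) + μ (t \ s) := (measure_inter_add_diff t hs).symm
    have hν : ν t = ν (t ∩ s) + ν (t \ s) := (measure_inter_add_diff t hs).symm
    have h3 : μ (t \ s) ≤ ν (t \ s) := h₂ _ (ht.diff hs) (diff_subset_iff.2 (by simp))
    have h4 : d₀ (t ∩ s) + ν (t ∩ s) = μ (t ∩ s) := by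
      rw [hd₀_apply _ (ht.inter hs)]
      rw [inter_assoc, inter_self]
      exact tsub_add_cancel_of_le (h₁ _ (ht.inter hs) inter_subset_right)
    calc μ t = μ (t ∩ s) + μ (t \ s) := hsplit
      _ ≤ (d₀ (t ∩ s) + ν (t ∩ s)) + ν (t \ s) := by rw [h4]; gcongr
      _ ≤ (d₀ t + ν (t ∩ s)) + ν (t \ s) := add_le_add (add_le_add (measure_mono inter_subset_left) le_rfl) le_rfl
      _ = d₀ t + ν t := by rw [hν]; ring
  exact hB.trans (by gcongr)

lemma my_sub_add_sub (μ₁ μ₂ ν₁ ν₂ : Measure α) [IsFiniteMeasure μ₁] [IsFiniteMeasure μ₂]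
    [IsFiniteMeasure ν₁] [IsFiniteMeasure ν₂] :
    (μ₁ + μ₂) - (ν₁ + ν₂) ≤ (μ₁ - ν₁) + (μ₂ - ν₂) := by
  refine Measure.sub_le_of_le_add ?_
  calc μ₁ + μ₂ ≤ ((μ₁ - ν₁) + ν₁) + ((μ₂ - ν₂) + ν₂) :=
        add_le_add (my_le_sub_add μ₁ ν₁) (my_le_sub_add μ₂ ν₂)
    _ = (μ₁ - ν₁) + (μ₂ - ν₂) + (ν₁ + ν₂) := (add_add_add_comm _ _ _ _)

lemma my_tvDist_add (μ₁ μ₂ ν₁ ν₂ : Measure α) [IsFiniteMeasure μ₁] [IsFiniteMeasure μ₂]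
    [IsFiniteMeasure ν₁] [IsFiniteMeasure ν₂] :
    tvDist (μ₁ + μ₂) (ν₁ + ν₂) ≤ tvDist μ₁ ν₁ + tvDist μ₂ ν₂ := by
  have fin : ∀ (ρ τ : Measure α) [IsFiniteMeasure ρ], (ρ - τ) univ ≠ ⊤ := fun ρ τ _ =>
    ((Measure.le_iff'.1 Measure.sub_le univ).trans_lt (measure_lt_top ρ univ)).ne
  have h1 : ((μ₁ + μ₂) - (ν₁ + ν₂)) univ ≤ (μ₁ - ν₁) univ + (μ₂ - ν₂) univ := by
    have := Measure.le_iff'.1 (my_sub_add_sub μ₁ μ₂ ν₁ ν₂) univ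
    simpa [Measure.add_apply] using this
  have h2 : ((ν₁ + ν₂) - (μ₁ + μ₂)) univ ≤ (ν₁ - μ₁) univ + (ν₂ - μ₂) univ := by
    have := Measure.le_iff'.1 (my_sub_add_sub ν₁ ν₂ μ₁ μ₂) univ
    simpa [Measure.add_apply] using this
  unfold tvDist
  rw [← ENNReal.toReal_add (ENNReal.add_ne_top.2 ⟨fin _ _, fin _ _⟩)
    (ENNReal.add_ne_top.2 ⟨fin _ _, fin _ _⟩)]
  refine ENNReal.toReal_mono ?_ ?_
  · exact ENNReal.add_ne_top.2 ⟨ENNReal.add_ne_top.2 ⟨fin _ _, fin _ _⟩,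
      ENNReal.add_ne_top.2 ⟨fin _ _, fin _ _⟩⟩
  · calc ((μ₁ + μ₂) - (ν₁ + ν₂)) univ + ((ν₁ + ν₂) - (μ₁ + μ₂)) univ
        ≤ ((μ₁ - ν₁) univ + (μ₂ - ν₂) univ) + ((ν₁ - μ₁) univ + (ν₂ - μ₂) univ) :=
          add_le_add h1 h2
      _ = _ := add_add_add_comm _ _ _ _

section wass

variable {d : ℕ} {p : ℝ}

lemma meas_mom (hp : 0 ≤ p) : Measurable fun x : Euc d => ENNReal.ofReal (‖x‖ ^ p) :=
  ((continuous_norm.rpow_const fun _ => Or.inr hp).measurable).ennreal_ofReal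

lemma meas_cost (hp : 0 ≤ p) :
    Measurable fun z : Euc d × Euc d => ENNReal.ofReal (dist z.1 z.2 ^ p) :=
  ((continuous_dist.rpow_const fun _ => Or.inr hp).measurable).ennreal_ofReal

lemma wcost_le (hp : 0 ≤ p) {μ ν : Measure (Euc d)} (π : Measure (Euc d × Euc d))
    (h : IsPlan π μ ν) :
    Wcost p π ≤ ENNReal.ofReal (2 ^ p) *
      ((∫⁻ x, ENNReal.ofReal (‖x‖ ^ p) ∂μ) + (∫⁻ x, ENNReal.ofReal (‖x‖ ^ p) ∂ν)) := by
  have hpt : ∀ z : Euc d × Euc d, ENNReal.ofReal (dist z.1 z.2 ^ p) ≤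
      ENNReal.ofReal (2 ^ p) * (ENNReal.ofReal (‖z.1‖ ^ p) + ENNReal.ofReal (‖z.2‖ ^ p)) := by
    rintro ⟨x, y⟩
    have h1 : dist x y ^ p ≤ 2 ^ p * (‖x‖ ^ p + ‖y‖ ^ p) := by
      have hd : dist x y ≤ 2 * max ‖x‖ ‖y‖ := by
        rw [dist_eq_norm, two_mul]
        exact (norm_sub_le x y).trans (add_le_add (le_max_left _ _) (le_max_right _ _))
      calc dist x y ^ p ≤ (2 * max ‖x‖ ‖y‖) ^ p :=
            Real.rpow_le_rpow dist_nonneg hd hp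
        _ = 2 ^ p * (max ‖x‖ ‖y‖) ^ p := Real.mul_rpow (by norm_num)
            (le_max_of_le_left (norm_nonneg _))
        _ ≤ 2 ^ p * (‖x‖ ^ p + ‖y‖ ^ p) := by
            refine mul_le_mul_of_nonneg_left ?_ (Real.rpow_nonneg (by norm_num) _)
            rcases le_total ‖x‖ ‖y‖ with hxy | hxy
            · rw [max_eq_right hxy]
              exact le_add_of_nonneg_left (Real.rpow_nonneg (norm_nonneg _) _)
            · rw [max_eq_left hxy]
              exact le_add_of_nonneg_right (Real.rpow_nonneg (norm_nonneg _) _)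
    calc ENNReal.ofReal (dist x y ^ p) ≤ ENNReal.ofReal (2 ^ p * (‖x‖ ^ p + ‖y‖ ^ p)) :=
          ENNReal.ofReal_le_ofReal h1
      _ = ENNReal.ofReal (2 ^ p) * (ENNReal.ofReal (‖x‖ ^ p) + ENNReal.ofReal (‖y‖ ^ p)) := by
          rw [ENNReal.ofReal_mul (Real.rpow_nonneg (by norm_num) _),
            ENNReal.ofReal_add (Real.rpow_nonneg (norm_nonneg _) _)
              (Real.rpow_nonneg (norm_nonneg _) _)]
  calc Wcost p π ≤ ∫⁻ z, ENNReal.ofReal (2 ^ p) *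
        (ENNReal.ofReal (‖z.1‖ ^ p) + ENNReal.ofReal (‖z.2‖ ^ p)) ∂π :=
        lintegral_mono hpt
    _ = ENNReal.ofReal (2 ^ p) * ((∫⁻ z, ENNReal.ofReal (‖z.1‖ ^ p) ∂π) +
        (∫⁻ z, ENNReal.ofReal (‖z.2‖ ^ p) ∂π)) := by
        have m1 : Measurable fun z : Euc d × Euc d => ENNReal.ofReal (‖z.1‖ ^ p) :=
          (meas_mom hp).comp measurable_fst
        have m2 : Measurable fun z : Euc d × Euc d => ENNReal.ofReal (‖z.2‖ ^ p) :=
          (meas_mom hp).comp measurable_snd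
        rw [lintegral_const_mul _ (f := fun z : Euc d × Euc d =>
          ENNReal.ofReal (‖z.1‖ ^ p) + ENNReal.ofReal (‖z.2‖ ^ p)) (m1.add m2), lintegral_add_left m1]
    _ = _ := by
        rw [← h.1, ← h.2, lintegral_map (meas_mom hp) measurable_fst,
          lintegral_map (meas_mom hp) measurable_snd]

lemma exists_plan {μ ν : Measure (Euc d)} [IsFiniteMeasure μ] [IsFiniteMeasure ν]
    (h : μ Set.univ = ν Set.univ) : ∃ π : Measure (Euc d × Euc d),
    IsPlan π μ ν ∧ IsFiniteMeasure π := by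
  by_cases hm : μ Set.univ = 0
  · have hμ0 : μ = 0 := Measure.measure_univ_eq_zero.1 hm
    have hν0 : ν = 0 := Measure.measure_univ_eq_zero.1 (h.symm.trans hm)
    exact ⟨0, ⟨by rw [Measure.map_zero, hμ0], by rw [Measure.map_zero, hν0]⟩, inferInstance⟩
  · refine ⟨(μ Set.univ)⁻¹ • μ.prod ν, ⟨?_, ?_⟩, ?_⟩
    · rw [Measure.map_smul, Measure.map_fst_prod, ← h, smul_smul,
        ENNReal.inv_mul_cancel hm (measure_ne_top μ _), one_smul]
    · rw [Measure.map_smul, Measure.map_snd_prod, smul_smul,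
        ENNReal.inv_mul_cancel hm (measure_ne_top μ _), one_smul]
    · constructor
      simp only [Measure.smul_apply, smul_eq_mul]
      exact ENNReal.mul_lt_top (ENNReal.inv_lt_top.2 (pos_iff_ne_zero.2 hm))
        (measure_lt_top _ _)

end wass

section wass2
variable {d : ℕ} {p : ℝ}

lemma plan_add {μ₁ ν₁ μ₂ ν₂ : Measure (Euc d)} {π₁ π₂ : Measure (Euc d × Euc d)}
    (h₁ : IsPlan π₁ μ₁ ν₁) (h₂ : IsPlan π₂ μ₂ ν₂) :
    IsPlan (π₁ + π₂) (μ₁ + μ₂) (ν₁ + ν₂) := by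
  constructor
  · rw [Measure.map_add _ _ measurable_fst, h₁.1, h₂.1]
  · rw [Measure.map_add _ _ measurable_snd, h₁.2, h₂.2]

lemma wcost_add (π₁ π₂ : Measure (Euc d × Euc d)) :
    Wcost p (π₁ + π₂) = Wcost p π₁ + Wcost p π₂ := by
  unfold Wcost
  exact lintegral_add_measure _ _ _

lemma wp_add_le (hp : 1 ≤ p) (μ₁ ν₁ μ₂ ν₂ : Measure (Euc d)) [IsFiniteMeasure μ₁]
    [IsFiniteMeasure ν₁] [IsFiniteMeasure μ₂] [IsFiniteMeasure ν₂]
    (f₁ : FinMom p μ₁) (g₁ : FinMom p ν₁) (f₂ : FinMom p μ₂) (g₂ : FinMom p ν₂)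
    (hm₁ : μ₁ Set.univ = ν₁ Set.univ) (hm₂ : μ₂ Set.univ = ν₂ Set.univ) :
    Wp p (μ₁ + μ₂) (ν₁ + ν₂) ≤ Wp p μ₁ ν₁ + Wp p μ₂ ν₂ := by
  have hp0 : (0 : ℝ) ≤ p := zero_le_one.trans hp
  have hip0 : (0 : ℝ) ≤ 1 / p := by positivity
  have hip1 : 1 / p ≤ 1 := (div_le_one (lt_of_lt_of_le one_pos hp)).2 hp
  set S := Wcost p '' {π : Measure (Euc d × Euc d) | IsPlan π (μ₁ + μ₂) (ν₁ + ν₂)} with hS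
  set S₁ := Wcost p '' {π : Measure (Euc d × Euc d) | IsPlan π μ₁ ν₁} with hS₁
  set S₂ := Wcost p '' {π : Measure (Euc d × Euc d) | IsPlan π μ₂ ν₂} with hS₂
  have hfin : ∀ (μ ν : Measure (Euc d)) (π : Measure (Euc d × Euc d)), IsPlan π μ ν →
      FinMom p μ → FinMom p ν → Wcost p π ≠ ⊤ := by
    intro μ ν π hπ hμ hν
    refine ne_top_of_le_ne_top ?_ (wcost_le hp0 π hπ)
    exact ENNReal.mul_ne_top ENNReal.ofReal_ne_top (ENNReal.add_ne_top.2 ⟨hμ.ne, hν.ne⟩)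
  obtain ⟨π₁, hπ₁, _⟩ := exists_plan hm₁
  obtain ⟨π₂, hπ₂, _⟩ := exists_plan hm₂
  have hC₁ : sInf S₁ ≠ ⊤ :=
    ne_top_of_le_ne_top (hfin _ _ _ hπ₁ f₁ g₁) (sInf_le ⟨π₁, hπ₁, rfl⟩)
  have hC₂ : sInf S₂ ≠ ⊤ :=
    ne_top_of_le_ne_top (hfin _ _ _ hπ₂ f₂ g₂) (sInf_le ⟨π₂, hπ₂, rfl⟩)
  have hle : sInf S ≤ sInf S₁ + sInf S₂ := by
    rw [ENNReal.sInf_add]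
    refine le_iInf₂ fun x hx => ?_
    rw [add_comm, ENNReal.sInf_add]
    refine le_iInf₂ fun y hy => ?_
    rw [add_comm]
    obtain ⟨ρ₁, hρ₁, rfl⟩ := hx
    obtain ⟨ρ₂, hρ₂, rfl⟩ := hy
    exact sInf_le ⟨ρ₁ + ρ₂, plan_add hρ₁ hρ₂, wcost_add ρ₁ ρ₂⟩
  have h' : (sInf S) ^ (1 / p) ≤ (sInf S₁) ^ (1 / p) + (sInf S₂) ^ (1 / p) :=
    (ENNReal.rpow_le_rpow hle hip0).trans (ENNReal.rpow_add_le_add_rpow _ _ hip0 hip1)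
  have h₁top : (sInf S₁) ^ (1 / p) ≠ ⊤ := ENNReal.rpow_ne_top_of_nonneg hip0 hC₁
  have h₂top : (sInf S₂) ^ (1 / p) ≠ ⊤ := ENNReal.rpow_ne_top_of_nonneg hip0 hC₂
  unfold Wp
  exact (ENNReal.toReal_mono (ENNReal.add_ne_top.2 ⟨h₁top, h₂top⟩) h').trans_eq
    (ENNReal.toReal_add h₁top h₂top)

end wass2

lemma finmom_zero {α : Type*} [MeasurableSpace α] [NormedAddCommGroup α] :
    FinMom p (0 : Measure α) := by
  unfold FinMom
  simp

lemma finmom_add {α : Type*} [MeasurableSpace α] [NormedAddCommGroup α] {μ ν : Measure α}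
    (hμ : FinMom p μ) (hν : FinMom p ν) : FinMom p (μ + ν) := by
  unfold FinMom at *
  rw [lintegral_add_measure]
  exact ENNReal.add_lt_top.2 ⟨hμ, hν⟩

end

theorem gw_add_le {d : ℕ} (hd : 1 ≤ d) (a b p : ℝ) (hp : 1 ≤ p) (ha : 0 < a) (hb : 0 < b)
    (μ₁ μ₂ ν₁ ν₂ : Measure (Euc d)) [IsFiniteMeasure μ₁] [IsFiniteMeasure μ₂]
    [IsFiniteMeasure ν₁] [IsFiniteMeasure ν₂] :
    GW a b p (μ₁ + μ₂) (ν₁ + ν₂) ≤ GW a b p μ₁ ν₁ + GW a b p μ₂ ν₂ := by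
  have hnonneg : ∀ (μ ν : Measure (Euc d)), ∀ r ∈ gwSet a b p μ ν, 0 ≤ r := by
    rintro μ ν r ⟨μ', ν', _, _, _, _, _, rfl⟩
    have h1 : 0 ≤ tvDist μ μ' := ENNReal.toReal_nonneg
    have h2 : 0 ≤ tvDist ν ν' := ENNReal.toReal_nonneg
    have h3 : 0 ≤ Wp p μ' ν' := ENNReal.toReal_nonneg
    have := mul_nonneg ha.le h1
    have := mul_nonneg ha.le h2
    have := mul_nonneg hb.le h3
    linarith
  have hbdd : ∀ (μ ν : Measure (Euc d)), BddBelow (gwSet a b p μ ν) := fun μ ν =>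
    ⟨0, fun r hr => hnonneg μ ν r hr⟩
  have hne : ∀ (μ ν : Measure (Euc d)), (gwSet a b p μ ν).Nonempty := fun μ ν =>
    ⟨_, 0, 0, inferInstance, inferInstance, finmom_zero, finmom_zero, rfl, rfl⟩
  have key : ∀ r₁ ∈ gwSet a b p μ₁ ν₁, ∀ r₂ ∈ gwSet a b p μ₂ ν₂,
      GW a b p (μ₁ + μ₂) (ν₁ + ν₂) ≤ r₁ + r₂ := by
    rintro r₁ ⟨μ₁', ν₁', i1, i2, f1, g1, hm1, rfl⟩ r₂ ⟨μ₂', ν₂', i3, i4, f2, g2, hm2, rfl⟩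
    have mem : a * tvDist (μ₁ + μ₂) (μ₁' + μ₂') + a * tvDist (ν₁ + ν₂) (ν₁' + ν₂') +
        b * Wp p (μ₁' + μ₂') (ν₁' + ν₂') ∈ gwSet a b p (μ₁ + μ₂) (ν₁ + ν₂) := by
      refine ⟨μ₁' + μ₂', ν₁' + ν₂', inferInstance, inferInstance,
        finmom_add f1 f2, finmom_add g1 g2, ?_, rfl⟩
      simp only [Measure.add_apply]
      rw [hm1, hm2]
    refine (csInf_le (hbdd _ _) mem).trans ?_
    have t1 := my_tvDist_add μ₁ μ₂ μ₁' μ₂'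
    have t2 := my_tvDist_add ν₁ ν₂ ν₁' ν₂'
    have t3 := wp_add_le hp μ₁' ν₁' μ₂' ν₂' f1 g1 f2 g2 hm1 hm2
    have := mul_le_mul_of_nonneg_left t1 ha.le
    have := mul_le_mul_of_nonneg_left t2 ha.le
    have := mul_le_mul_of_nonneg_left t3 hb.le
    linarith
  have step1 : ∀ r₁ ∈ gwSet a b p μ₁ ν₁,
      GW a b p (μ₁ + μ₂) (ν₁ + ν₂) - r₁ ≤ GW a b p μ₂ ν₂ := fun r₁ h₁ =>
    le_csInf (hne _ _) fun r₂ h₂ => by linarith [key r₁ h₁ r₂ h₂]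
  have step2 : GW a b p (μ₁ + μ₂) (ν₁ + ν₂) - GW a b p μ₂ ν₂ ≤ GW a b p μ₁ ν₁ :=
    le_csInf (hne _ _) fun r₁ h₁ => by linarith [step1 r₁ h₁]
  linarith
end

section
/- For Dirac masses on the real line, the generalized Wasserstein distance is W^{a,b}_p(δ_0, δ_x) = min{2a, bx} for every x ≥ 0. -/
open MeasureTheory ENNReal Filter Topology

section GWhelpers

open MeasureTheory ENNReal

variable {p a b x : ℝ}

lemma measurable_normRpow (p : ℝ) (hp : 0 ≤ p) :
    Measurable fun y : ℝ => ENNReal.ofReal (‖y‖ ^ p) := by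
  exact (ENNReal.continuous_ofReal.comp
    (continuous_norm.rpow_const fun y => Or.inr hp)).measurable

lemma measurable_costFun (p : ℝ) (hp : 0 ≤ p) :
    Measurable fun z : ℝ × ℝ => ENNReal.ofReal (dist z.1 z.2 ^ p) := by
  exact (ENNReal.continuous_ofReal.comp
    ((continuous_fst.dist continuous_snd).rpow_const fun z => Or.inr hp)).measurable

/-- `(dirac c - μ') univ ≥ 1 - μ' {c}`. -/
lemma dirac_sub_univ_ge (c : ℝ) (μ' : Measure ℝ) :
    1 - μ' {c} ≤ (Measure.dirac c - μ') Set.univ := by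
  have h : ((1 - μ' {c}) • Measure.dirac c) ≤ Measure.dirac c - μ' := by
    rw [Measure.sub_def]
    refine le_sInf fun τ hτ => ?_
    rw [Set.mem_setOf_eq] at hτ
    refine Measure.le_iff.mpr fun s hs => ?_
    rw [Measure.smul_apply, smul_eq_mul]
    by_cases hc : c ∈ s
    · have hsc : s ∩ {c} = {c} := by
        ext y; simp (config := {contextual := true}) [hc]
      have h1 : Measure.dirac c (s ∩ {c}) ≤ τ (s ∩ {c}) + μ' (s ∩ {c}) :=
        Measure.le_iff'.mp hτ (s ∩ {c})
      rw [hsc, Measure.dirac_apply_of_mem (Set.mem_singleton c)] at h1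
      have h2 : 1 - μ' {c} ≤ τ {c} := tsub_le_iff_right.mpr h1
      calc (1 - μ' {c}) * Measure.dirac c s ≤ 1 - μ' {c} := by
            exact mul_le_of_le_one_right' prob_le_one
        _ ≤ τ {c} := h2
        _ ≤ τ s := measure_mono (by simpa using hc)
    · rw [Measure.dirac_apply' c hs, Set.indicator_of_notMem hc]
      simp
  have := Measure.le_iff'.mp h Set.univ
  rwa [Measure.smul_apply, smul_eq_mul, measure_univ, mul_one] at this

/-- `(μ' - dirac c) univ ≥ μ' univ - μ' {c}`. -/
lemma sub_dirac_univ_ge (c : ℝ) (μ' : Measure ℝ) :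
    μ' Set.univ - μ' {c} ≤ (μ' - Measure.dirac c) Set.univ := by
  have h : μ'.restrict {c}ᶜ ≤ μ' - Measure.dirac c := by
    rw [Measure.sub_def]
    refine le_sInf fun τ hτ => ?_
    rw [Set.mem_setOf_eq] at hτ
    refine Measure.le_iff.mpr fun s hs => ?_
    rw [Measure.restrict_apply hs]
    have h1 : μ' (s ∩ {c}ᶜ) ≤ τ (s ∩ {c}ᶜ) + Measure.dirac c (s ∩ {c}ᶜ) :=
      Measure.le_iff'.mp hτ _
    have h2 : Measure.dirac c (s ∩ {c}ᶜ) = 0 := by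
      rw [Measure.dirac_apply' _ (hs.inter (measurableSet_singleton c).compl)]
      exact Set.indicator_of_notMem (fun hmem => hmem.2 rfl) _
    rw [h2, add_zero] at h1
    exact h1.trans (measure_mono Set.inter_subset_left)
  have h3 := Measure.le_iff'.mp h Set.univ
  rw [Measure.restrict_apply_univ] at h3
  refine le_trans ?_ h3
  have : μ' Set.univ ≤ μ' {c}ᶜ + μ' {c} := by
    rw [← Set.compl_union_self {c}]
    exact measure_union_le _ _
  exact tsub_le_iff_right.mpr this

/-- corner mass bound for plans -/
lemma plan_corner (c d : ℝ) {π : Measure (ℝ × ℝ)} {μ' ν' : Measure ℝ}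
    (hπ : IsPlan π μ' ν') :
    μ' {c} + ν' {d} ≤ π {(c, d)} + π Set.univ := by
  have hA : π (Prod.fst ⁻¹' {c}) = μ' {c} := by
    rw [← hπ.1, Measure.map_apply measurable_fst (measurableSet_singleton c)]
  have hB : π (Prod.snd ⁻¹' {d}) = ν' {d} := by
    rw [← hπ.2, Measure.map_apply measurable_snd (measurableSet_singleton d)]
  have hAB : (Prod.fst ⁻¹' {c} : Set (ℝ × ℝ)) ∩ Prod.snd ⁻¹' {d} = {(c, d)} := by
    ext z
    simp [Prod.ext_iff, eq_comm]
  have := measure_union_add_inter (μ := π) (Prod.fst ⁻¹' {c})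
    (measurable_snd (measurableSet_singleton d))
  rw [hAB] at this
  calc μ' {c} + ν' {d} = π (Prod.fst ⁻¹' {c}) + π (Prod.snd ⁻¹' {d}) := by rw [hA, hB]
    _ = π (Prod.fst ⁻¹' {c} ∪ Prod.snd ⁻¹' {d}) + π {(c, d)} := this.symm
    _ ≤ π Set.univ + π {(c, d)} :=
        add_le_add (measure_mono (Set.subset_univ _)) le_rfl
    _ = π {(c, d)} + π Set.univ := add_comm _ _

lemma plan_univ {π : Measure (ℝ × ℝ)} {μ' ν' : Measure ℝ} (hπ : IsPlan π μ' ν') :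
    π Set.univ = μ' Set.univ := by
  rw [← hπ.1, Measure.map_apply measurable_fst MeasurableSet.univ, Set.preimage_univ]

lemma cost_ge_corner (p c d : ℝ) (π : Measure (ℝ × ℝ)) :
    ENNReal.ofReal (dist c d ^ p) * π {(c, d)} ≤ Wcost p π := by
  have h := MeasureTheory.setLIntegral_le_lintegral (μ := π) {((c : ℝ), d)}
    (fun z => ENNReal.ofReal (dist z.1 z.2 ^ p))
  rw [lintegral_singleton (fun z : ℝ × ℝ => ENNReal.ofReal (dist z.1 z.2 ^ p)) ((c, d) : ℝ × ℝ)] at h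
  exact h

end GWhelpers

section GWhelpers2

open MeasureTheory ENNReal

lemma dirac_plan (x : ℝ) :
    IsPlan (Measure.dirac ((0 : ℝ), x)) (Measure.dirac (0 : ℝ)) (Measure.dirac x) :=
  ⟨Measure.map_dirac' measurable_fst _, Measure.map_dirac' measurable_snd _⟩

lemma dist_zero_x {x : ℝ} (hx : 0 ≤ x) : dist (0 : ℝ) x = x := by
  rw [Real.dist_eq, zero_sub, abs_neg, abs_of_nonneg hx]

lemma Wcost_dirac {p : ℝ} (hp : 1 ≤ p) {x : ℝ} (hx : 0 ≤ x) :
    Wcost p (Measure.dirac ((0 : ℝ), x)) = ENNReal.ofReal (x ^ p) := by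
  unfold Wcost
  rw [lintegral_dirac' _ (measurable_costFun p (zero_le_one.trans hp))]
  simp [dist_zero_x hx]

lemma ofReal_rpow_invp {p : ℝ} (hp : 1 ≤ p) {x : ℝ} (hx : 0 ≤ x) :
    (ENNReal.ofReal (x ^ p)) ^ (1 / p) = ENNReal.ofReal x := by
  have hp0 : 0 < p := lt_of_lt_of_le zero_lt_one hp
  rw [← ENNReal.ofReal_rpow_of_nonneg hx hp0.le, ← ENNReal.rpow_mul,
    mul_one_div, div_self hp0.ne', ENNReal.rpow_one]

lemma Wp_dirac_dirac {p : ℝ} (hp : 1 ≤ p) {x : ℝ} (hx : 0 ≤ x) :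
    Wp p (Measure.dirac (0 : ℝ)) (Measure.dirac x) = x := by
  have hS : sInf (Wcost p '' {π | IsPlan π (Measure.dirac (0 : ℝ)) (Measure.dirac x)})
      = ENNReal.ofReal (x ^ p) := by
    refine le_antisymm (sInf_le ⟨_, dirac_plan x, Wcost_dirac hp hx⟩) ?_
    refine le_sInf fun c hc => ?_
    obtain ⟨π, hπ, rfl⟩ := hc
    have h1 : (1 : ℝ≥0∞) ≤ π {((0 : ℝ), x)} := by
      have h2 := plan_corner 0 x hπ
      rw [plan_univ hπ] at h2
      simp only [Measure.dirac_apply_of_mem (Set.mem_singleton _), measure_univ] at h2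
      exact ENNReal.le_of_add_le_add_right ENNReal.one_ne_top h2
    calc ENNReal.ofReal (x ^ p) = ENNReal.ofReal (dist (0 : ℝ) x ^ p) * 1 := by
          rw [dist_zero_x hx, mul_one]
      _ ≤ ENNReal.ofReal (dist (0 : ℝ) x ^ p) * π {((0 : ℝ), x)} := by gcongr
      _ ≤ Wcost p π := cost_ge_corner p 0 x π
  rw [Wp, hS, ofReal_rpow_invp hp hx, ENNReal.toReal_ofReal hx]

lemma Wp_zero_zero {p : ℝ} (hp : 1 ≤ p) : Wp p (0 : Measure ℝ) 0 = 0 := by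
  have h0 : IsPlan (0 : Measure (ℝ × ℝ)) 0 0 := by
    constructor <;> simp [IsPlan]
  have hc : Wcost p (0 : Measure (ℝ × ℝ)) = 0 := by simp [Wcost]
  have hS : sInf (Wcost p '' {π | IsPlan π (0 : Measure ℝ) 0}) = 0 :=
    le_antisymm (sInf_le ⟨_, h0, hc⟩) zero_le
  rw [Wp, hS, ENNReal.zero_rpow_of_pos (by positivity), ENNReal.toReal_zero]

lemma tvDist_self (μ : Measure ℝ) : tvDist μ μ = 0 := by
  simp [tvDist, Measure.sub_self]

lemma tvDist_zero_right (μ : Measure ℝ) [IsFiniteMeasure μ] :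
    tvDist μ 0 = (μ Set.univ).toReal := by
  rw [tvDist, Measure.zero_sub, Measure.sub_apply MeasurableSet.univ (Measure.zero_le μ)]
  simp

lemma FinMom_zero (p : ℝ) : FinMom p (0 : Measure ℝ) := by
  simp [FinMom]

lemma FinMom_dirac {p : ℝ} (hp : 1 ≤ p) (c : ℝ) : FinMom p (Measure.dirac c) := by
  rw [FinMom, lintegral_dirac' _ (measurable_normRpow p (zero_le_one.trans hp))]
  exact ENNReal.ofReal_lt_top

lemma plan_exists (μ' ν' : Measure ℝ) [IsFiniteMeasure μ'] [IsFiniteMeasure ν']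
    (h : μ' Set.univ = ν' Set.univ) : ∃ π : Measure (ℝ × ℝ), IsPlan π μ' ν' := by
  by_cases hM : μ' Set.univ = 0
  · have hμ0 : μ' = 0 := Measure.measure_univ_eq_zero.mp hM
    have hν0 : ν' = 0 := Measure.measure_univ_eq_zero.mp (h ▸ hM)
    exact ⟨0, by simp [IsPlan, hμ0, hν0]⟩
  · refine ⟨(μ' Set.univ)⁻¹ • μ'.prod ν', ?_, ?_⟩
    · rw [Measure.map_smul, Measure.map_fst_prod, ← h, smul_smul,
        ENNReal.inv_mul_cancel hM (measure_ne_top _ _), one_smul]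
    · rw [Measure.map_smul, Measure.map_snd_prod, smul_smul,
        ENNReal.inv_mul_cancel hM (measure_ne_top _ _), one_smul]

lemma rpow_dist_bound {p : ℝ} (hp : 1 ≤ p) (u v : ℝ) :
    dist u v ^ p ≤ 2 ^ p * ‖u‖ ^ p + 2 ^ p * ‖v‖ ^ p := by
  have hp0 : (0 : ℝ) ≤ p := zero_le_one.trans hp
  have h1 : dist u v ≤ 2 * max ‖u‖ ‖v‖ := by
    rw [dist_eq_norm]
    calc ‖u - v‖ ≤ ‖u‖ + ‖v‖ := norm_sub_le u v
      _ ≤ 2 * max ‖u‖ ‖v‖ := by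
          rw [two_mul]; exact add_le_add (le_max_left _ _) (le_max_right _ _)
  have h2 : dist u v ^ p ≤ (2 * max ‖u‖ ‖v‖) ^ p :=
    Real.rpow_le_rpow dist_nonneg h1 hp0
  have h3 : (2 * max ‖u‖ ‖v‖) ^ p = 2 ^ p * max ‖u‖ ‖v‖ ^ p :=
    Real.mul_rpow (by norm_num) (le_max_of_le_left (norm_nonneg u))
  have h4 : max ‖u‖ ‖v‖ ^ p ≤ ‖u‖ ^ p + ‖v‖ ^ p := by
    rcases max_cases ‖u‖ ‖v‖ with ⟨hm, _⟩ | ⟨hm, _⟩ <;> rw [hm]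
    · nlinarith [Real.rpow_nonneg (norm_nonneg v) p]
    · nlinarith [Real.rpow_nonneg (norm_nonneg u) p]
  calc dist u v ^ p ≤ 2 ^ p * max ‖u‖ ‖v‖ ^ p := by rw [← h3]; exact h2
    _ ≤ 2 ^ p * (‖u‖ ^ p + ‖v‖ ^ p) :=
        mul_le_mul_of_nonneg_left h4 (Real.rpow_nonneg (by norm_num) p)
    _ = 2 ^ p * ‖u‖ ^ p + 2 ^ p * ‖v‖ ^ p := mul_add _ _ _

lemma cost_ne_top {p : ℝ} (hp : 1 ≤ p) {π : Measure (ℝ × ℝ)} {μ' ν' : Measure ℝ}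
    (hπ : IsPlan π μ' ν') (h1 : FinMom p μ') (h2 : FinMom p ν') :
    Wcost p π ≠ ⊤ := by
  have hp0 : (0 : ℝ) ≤ p := zero_le_one.trans hp
  set f : ℝ → ℝ≥0∞ := fun y => ENNReal.ofReal (2 ^ p * ‖y‖ ^ p) with hf
  have hfm : Measurable f :=
    ((continuous_const.mul (continuous_norm.rpow_const fun y => Or.inr hp0)).measurable).ennreal_ofReal
  have hkey : ∀ z : ℝ × ℝ, ENNReal.ofReal (dist z.1 z.2 ^ p) ≤ f z.1 + f z.2 := by
    intro z
    refine le_trans (ENNReal.ofReal_le_ofReal (rpow_dist_bound hp z.1 z.2)) ?_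
    exact ENNReal.ofReal_add_le
  have hint : ∀ (μ : Measure ℝ), FinMom p μ → ∫⁻ y, f y ∂μ ≠ ⊤ := by
    intro μ hμ
    have : ∫⁻ y, f y ∂μ = ENNReal.ofReal (2 ^ p) * ∫⁻ y, ENNReal.ofReal (‖y‖ ^ p) ∂μ := by
      rw [← lintegral_const_mul' _ _ ENNReal.ofReal_ne_top]
      refine lintegral_congr fun y => ?_
      rw [hf]
      exact ENNReal.ofReal_mul (Real.rpow_nonneg (by norm_num : (0:ℝ) ≤ 2) p)
    rw [this]
    exact ENNReal.mul_ne_top ENNReal.ofReal_ne_top hμ.ne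
  have hb : Wcost p π ≤ ∫⁻ y, f y ∂μ' + ∫⁻ y, f y ∂ν' := by
    calc Wcost p π ≤ ∫⁻ z, (f z.1 + f z.2) ∂π := lintegral_mono hkey
      _ = ∫⁻ z, f z.1 ∂π + ∫⁻ z, f z.2 ∂π :=
          lintegral_add_left (hfm.comp measurable_fst) _
      _ = ∫⁻ y, f y ∂μ' + ∫⁻ y, f y ∂ν' := by
          rw [← hπ.1, ← hπ.2, lintegral_map hfm measurable_fst,
            lintegral_map hfm measurable_snd]
  exact ne_top_of_le_ne_top (ENNReal.add_ne_top.mpr ⟨hint μ' h1, hint ν' h2⟩) hb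

end GWhelpers2

open MeasureTheory ENNReal in
lemma tv_dirac_bound (c : ℝ) (μ' : Measure ℝ) [IsFiniteMeasure μ'] :
    1 + (μ' Set.univ).toReal ≤ tvDist (Measure.dirac c) μ' + 2 * (μ' {c}).toReal := by
  set T1 := (Measure.dirac c - μ') Set.univ with hT1
  set T2 := (μ' - Measure.dirac c) Set.univ with hT2
  have hT1t : T1 ≠ ⊤ :=
    ne_top_of_le_ne_top (by simp : Measure.dirac c Set.univ ≠ ⊤)
      (Measure.le_iff'.mp Measure.sub_le Set.univ)
  have hT2t : T2 ≠ ⊤ :=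
    ne_top_of_le_ne_top (measure_ne_top μ' Set.univ)
      (Measure.le_iff'.mp Measure.sub_le Set.univ)
  have hUt : μ' {c} ≠ ⊤ := measure_ne_top _ _
  have h1 : (1 : ℝ≥0∞) ≤ T1 + μ' {c} := tsub_le_iff_right.mp (dirac_sub_univ_ge c μ')
  have h2 : μ' Set.univ ≤ T2 + μ' {c} := tsub_le_iff_right.mp (sub_dirac_univ_ge c μ')
  have h1' : (1 : ℝ) ≤ T1.toReal + (μ' {c}).toReal := by
    have := ENNReal.toReal_mono (ENNReal.add_ne_top.mpr ⟨hT1t, hUt⟩) h1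
    rwa [ENNReal.toReal_one, ENNReal.toReal_add hT1t hUt] at this
  have h2' : (μ' Set.univ).toReal ≤ T2.toReal + (μ' {c}).toReal := by
    have := ENNReal.toReal_mono (ENNReal.add_ne_top.mpr ⟨hT2t, hUt⟩) h2
    rwa [ENNReal.toReal_add hT2t hUt] at this
  have htv : tvDist (Measure.dirac c) μ' = T1.toReal + T2.toReal := by
    rw [tvDist, ENNReal.toReal_add hT1t hT2t]
  rw [htv]
  linarith

theorem gw_dirac_dirac (a b p : ℝ) (hp : 1 ≤ p) (ha : 0 < a) (hb : 0 < b)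
    (x : ℝ) (hx : 0 ≤ x) :
    GW a b p (Measure.dirac (0 : ℝ)) (Measure.dirac x) = min (2 * a) (b * x) := by
  have hp0 : (0 : ℝ) < p := lt_of_lt_of_le zero_lt_one hp
  have mem2a : 2 * a ∈ gwSet a b p (Measure.dirac (0 : ℝ)) (Measure.dirac x) := by
    refine ⟨0, 0, inferInstance, inferInstance, FinMom_zero p, FinMom_zero p, rfl, ?_⟩
    rw [tvDist_zero_right, tvDist_zero_right, Wp_zero_zero hp]
    simp only [measure_univ, ENNReal.toReal_one]
    ring
  have membx : b * x ∈ gwSet a b p (Measure.dirac (0 : ℝ)) (Measure.dirac x) := by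
    refine ⟨Measure.dirac 0, Measure.dirac x, inferInstance, inferInstance,
      FinMom_dirac hp 0, FinMom_dirac hp x, by simp, ?_⟩
    rw [tvDist_self, tvDist_self, Wp_dirac_dirac hp hx]
    ring
  have hbdd : BddBelow (gwSet a b p (Measure.dirac (0 : ℝ)) (Measure.dirac x)) := by
    refine ⟨0, fun r hr => ?_⟩
    obtain ⟨μ', ν', h1, h2, h3, h4, h5, rfl⟩ := hr
    have e1 : (0 : ℝ) ≤ tvDist (Measure.dirac (0 : ℝ)) μ' := ENNReal.toReal_nonneg
    have e2 : (0 : ℝ) ≤ tvDist (Measure.dirac x) ν' := ENNReal.toReal_nonneg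
    have e3 : (0 : ℝ) ≤ Wp p μ' ν' := ENNReal.toReal_nonneg
    positivity
  have hlow : ∀ r ∈ gwSet a b p (Measure.dirac (0 : ℝ)) (Measure.dirac x),
      min (2 * a) (b * x) ≤ r := by
    rintro r ⟨μ', ν', hfin1, hfin2, hm1, hm2, hmass, rfl⟩
    haveI := hfin1; haveI := hfin2
    set M := μ' Set.univ with hM
    set U := μ' {(0 : ℝ)} with hU
    set V := ν' {x} with hV
    have hMt : M ≠ ⊤ := measure_ne_top _ _
    have hUt : U ≠ ⊤ := measure_ne_top _ _
    have hVt : V ≠ ⊤ := measure_ne_top _ _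
    set m : ℝ := M.toReal with hm
    set u : ℝ := U.toReal with hu
    set v : ℝ := V.toReal with hv
    have htv1 : 1 + m ≤ tvDist (Measure.dirac (0 : ℝ)) μ' + 2 * u :=
      tv_dirac_bound 0 μ'
    have htv2 : 1 + m ≤ tvDist (Measure.dirac x) ν' + 2 * v := by
      have := tv_dirac_bound x ν'
      rwa [← hmass] at this
    set g : ℝ := min 1 (max 0 (u + v - m)) with hg
    have hg0 : 0 ≤ g := le_min zero_le_one (le_max_left _ _)
    have hg1 : g ≤ 1 := min_le_left _ _
    -- Wasserstein lower bound
    have hWp : x * g ≤ Wp p μ' ν' := by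
      set S := sInf (Wcost p '' {π | IsPlan π μ' ν'}) with hS
      obtain ⟨π0, hπ0⟩ := plan_exists μ' ν' hmass
      have hStop : S ≠ ⊤ :=
        ne_top_of_le_ne_top (cost_ne_top hp hπ0 hm1 hm2) (sInf_le ⟨π0, hπ0, rfl⟩)
      have hgp : g ^ p ≤ g := by
        rcases eq_or_lt_of_le hg0 with hg' | hg'
        · rw [← hg', Real.zero_rpow hp0.ne']
        · calc g ^ p ≤ g ^ (1 : ℝ) := Real.rpow_le_rpow_of_exponent_ge hg' hg1 hp
            _ = g := Real.rpow_one g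
      have h6 : ENNReal.ofReal (g ^ p) ≤ U + V - M := by
        have hgmax : g ≤ max 0 (u + v - m) := min_le_right _ _
        refine le_trans (ENNReal.ofReal_le_ofReal (hgp.trans hgmax)) ?_
        by_cases hcmp : M ≤ U + V
        · have hmr : m ≤ u + v := by
            have := ENNReal.toReal_mono (ENNReal.add_ne_top.mpr ⟨hUt, hVt⟩) hcmp
            rwa [ENNReal.toReal_add hUt hVt] at this
          rw [max_eq_right (by linarith), ENNReal.ofReal_sub _ ENNReal.toReal_nonneg]
          have huv : ENNReal.ofReal (u + v) = U + V := by
            rw [hu, hv, ← ENNReal.toReal_add hUt hVt,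
              ENNReal.ofReal_toReal (ENNReal.add_ne_top.mpr ⟨hUt, hVt⟩)]
          rw [huv, show ENNReal.ofReal m = M from by rw [hm, ENNReal.ofReal_toReal hMt]]
        · have hcmp' : U + V ≤ M := le_of_not_ge hcmp
          have hmr : u + v ≤ m := by
            have := ENNReal.toReal_mono hMt hcmp'
            rwa [ENNReal.toReal_add hUt hVt] at this
          rw [max_eq_left (by linarith)]
          simp
      have hLS : ENNReal.ofReal ((x * g) ^ p) ≤ S := by
        refine le_sInf fun c hc => ?_
        obtain ⟨π, hπ, rfl⟩ := hc
        have hcorner : U + V ≤ π {((0 : ℝ), x)} + M := by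
          have := plan_corner 0 x hπ
          rwa [plan_univ hπ, ← hM, ← hU, ← hV] at this
        have h5 : U + V - M ≤ π {((0 : ℝ), x)} := tsub_le_iff_right.mpr hcorner
        calc ENNReal.ofReal ((x * g) ^ p)
            = ENNReal.ofReal (x ^ p) * ENNReal.ofReal (g ^ p) := by
              rw [Real.mul_rpow hx hg0,
                ENNReal.ofReal_mul (Real.rpow_nonneg hx p)]
          _ ≤ ENNReal.ofReal (x ^ p) * π {((0 : ℝ), x)} := by
              exact mul_le_mul_right (h6.trans h5) _
          _ = ENNReal.ofReal (dist (0 : ℝ) x ^ p) * π {((0 : ℝ), x)} := by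
              rw [dist_zero_x hx]
          _ ≤ Wcost p π := cost_ge_corner p 0 x π
      have hrp : ENNReal.ofReal (x * g) ≤ S ^ (1 / p) := by
        rw [← ofReal_rpow_invp hp (mul_nonneg hx hg0)]
        exact ENNReal.rpow_le_rpow hLS (by positivity)
      have hWpdef : Wp p μ' ν' = (S ^ (1 / p)).toReal := rfl
      rw [hWpdef]
      have := ENNReal.toReal_mono
        (ENNReal.rpow_ne_top_of_nonneg (by positivity) hStop) hrp
      rwa [ENNReal.toReal_ofReal (mul_nonneg hx hg0)] at this
    -- tv sum bound
    have htvsum : 2 - 2 * g ≤ tvDist (Measure.dirac (0 : ℝ)) μ' + tvDist (Measure.dirac x) ν' := by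
      rcases le_total 1 (u + v - m) with hc | hc
      · have hgeq : g = 1 := min_eq_left (le_max_of_le_right hc)
        have e1 : (0 : ℝ) ≤ tvDist (Measure.dirac (0 : ℝ)) μ' := ENNReal.toReal_nonneg
        have e2 : (0 : ℝ) ≤ tvDist (Measure.dirac x) ν' := ENNReal.toReal_nonneg
        rw [hgeq]; linarith
      · have hcg : u + v - m ≤ g := le_min hc (le_max_right _ _)
        linarith
    -- final arithmetic
    have k1 : min (2 * a) (b * x) * (1 - g) ≤ 2 * a * (1 - g) :=
      mul_le_mul_of_nonneg_right (min_le_left _ _) (by linarith)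
    have k2 : min (2 * a) (b * x) * g ≤ b * x * g :=
      mul_le_mul_of_nonneg_right (min_le_right _ _) hg0
    have k3 : a * (2 - 2 * g) ≤ a * (tvDist (Measure.dirac (0 : ℝ)) μ' + tvDist (Measure.dirac x) ν') :=
      mul_le_mul_of_nonneg_left htvsum ha.le
    have k4 : b * (x * g) ≤ b * Wp p μ' ν' := mul_le_mul_of_nonneg_left hWp hb.le
    nlinarith [k1, k2, k3, k4]
  have hGW : GW a b p (Measure.dirac (0 : ℝ)) (Measure.dirac x)
      = sInf (gwSet a b p (Measure.dirac (0 : ℝ)) (Measure.dirac x)) := rfl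
  rw [hGW]
  exact le_antisymm (le_min (csInf_le hbdd mem2a) (csInf_le hbdd membx))
    (le_csInf ⟨2 * a, mem2a⟩ hlow)
end

section
/- Let μ_n be a sequence in M and μ ∈ M. If μ_n converges weakly to μ (i.e. ∫ f dμ_n → ∫ f dμ for every bounded continuous f : ℝ^d → ℝ) and the family {μ_n} is tight, then W^{a,b}_p(μ_n, μ) → 0. -/
open MeasureTheory ENNReal Filter Topology

noncomputable section

/-- `μ ∈ M_0^{ac}`: a finite measure, absolutely continuous with respect to the
Lebesgue measure, with bounded support. -/
def M0ac {d : ℕ} (μ : MeasureTheory.Measure (Euc d)) : Prop :=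
  MeasureTheory.IsFiniteMeasure μ ∧ μ ≪ MeasureTheory.volume ∧ Bornology.IsBounded (msupp μ)

/-- `Φ` is the flow of the vector field `v`: `Φ 0 = id` and
`∂_t Φ_t(x) = v(Φ_t(x))`. -/
def IsFlow {d : ℕ} (v : Euc d → Euc d) (Φ : ℝ → Euc d → Euc d) : Prop :=
  (∀ x, Φ 0 x = x) ∧ ∀ x t, HasDerivAt (fun s => Φ s x) (v (Φ t x)) t

end

noncomputable section Aux

/-- map of a finite sum of measures -/
lemma aux_map_finset_sum {α β ι : Type*} [MeasurableSpace α] [MeasurableSpace β]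
    {f : α → β} (hf : Measurable f) (s : Finset ι) (m : ι → Measure α) :
    (∑ i ∈ s, m i).map f = ∑ i ∈ s, (m i).map f := by
  classical
  induction s using Finset.induction_on with
  | empty => simp
  | insert _ _ hi ih => rw [Finset.sum_insert hi, Finset.sum_insert hi,
      Measure.map_add _ _ hf, ih]

lemma aux_div_mul_cancel {x y : ℝ≥0∞} (h : x ≤ y) (hy : y ≠ ⊤) : x / y * y = x := by
  rcases eq_or_ne y 0 with rfl | h0
  · simp [le_antisymm h (zero_le : 0 ≤ x)]
  · exact ENNReal.div_mul_cancel h0 hy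

lemma aux_div_le_one {x y : ℝ≥0∞} (h : x ≤ y) : x / y ≤ 1 :=
  ENNReal.div_le_of_le_mul (by simpa using h)

/-- Portmanteau: weak convergence plus null frontier gives convergence of measures. -/
lemma aux_tendsto_measure {d : ℕ} (μs : ℕ → Measure (Euc d)) (μ : Measure (Euc d))
    (hfin : ∀ n, IsFiniteMeasure (μs n)) [IsFiniteMeasure μ] (hconv : WeakConv μs μ)
    {E : Set (Euc d)} (hfr : μ (frontier E) = 0) :
    Tendsto (fun n => μs n E) atTop (𝓝 (μ E)) := by
  -- package as FiniteMeasure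
  let P : ℕ → FiniteMeasure (Euc d) := fun n => ⟨μs n, hfin n⟩
  let P0 : FiniteMeasure (Euc d) := ⟨μ, inferInstance⟩
  have hP : Tendsto P atTop (𝓝 P0) := by
    apply FiniteMeasure.tendsto_of_forall_integral_tendsto
    intro f
    exact hconv f f.continuous ⟨‖f‖, fun x => by
      rw [← Real.norm_eq_abs]; exact f.norm_coe_le_norm x⟩
  have hC : ∀ F : Set (Euc d), IsClosed F → (atTop.limsup fun n => μs n F) ≤ μ F := by
    intro F hF
    exact FiniteMeasure.limsup_measure_closed_le_of_tendsto hP hF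
  have htot : Tendsto (fun n => μs n Set.univ) atTop (𝓝 (μ Set.univ)) := by
    have h1 := hconv (fun _ => (1 : ℝ)) continuous_const ⟨1, fun x => by norm_num⟩
    simp only [integral_const, smul_eq_mul, mul_one] at h1
    have h2 : Tendsto (fun n => ENNReal.ofReal (μs n Set.univ).toReal) atTop
        (𝓝 (ENNReal.ofReal (μ Set.univ).toReal)) :=
      (ENNReal.continuous_ofReal.tendsto _).comp h1
    simpa [ENNReal.ofReal_toReal, measure_ne_top] using h2
  have hO : ∀ G : Set (Euc d), IsOpen G → μ G ≤ atTop.liminf fun n => μs n G := by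
    intro G hG
    refine ENNReal.le_of_forall_pos_le_add fun ε hε _ => ?_
    set η : ℝ≥0∞ := (ε : ℝ≥0∞) / 2 with hηdef
    have hη0 : η ≠ 0 := by
      rw [hηdef]
      simp only [ne_eq, ENNReal.div_eq_zero_iff, ENNReal.coe_eq_zero, not_or]
      exact ⟨by exact_mod_cast hε.ne', ENNReal.ofNat_ne_top⟩
    have hηε : η + η = (ε : ℝ≥0∞) := ENNReal.add_halves _
    by_cases hsmall : μ Set.univ ≤ η
    · calc μ G ≤ μ Set.univ := measure_mono (Set.subset_univ G)
        _ ≤ η := hsmall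
        _ ≤ (ε : ℝ≥0∞) := by rw [← hηε]; exact le_self_add
        _ ≤ (atTop.liminf fun n => μs n G) + ε := le_add_self
    · push_neg at hsmall
      have huniv0 : μ Set.univ ≠ 0 := fun h => by simp [h] at hsmall
      have h1 : ∀ᶠ n in atTop, μ Set.univ - η < μs n Set.univ :=
        htot.eventually_const_lt
          (ENNReal.sub_lt_self (measure_ne_top μ _) huniv0 hη0)
      have h2 : ∀ᶠ n in atTop, μs n Gᶜ < μ Gᶜ + η :=
        Filter.eventually_lt_of_limsup_lt
          (lt_of_le_of_lt (hC Gᶜ hG.isClosed_compl)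
            (ENNReal.lt_add_right (measure_ne_top μ _) hη0))
      have key : ∀ᶠ n in atTop, (μ Set.univ - η) - (μ Gᶜ + η) ≤ μs n G := by
        filter_upwards [h1, h2] with n hn1 hn2
        have hG' : μs n G = μs n Set.univ - μs n Gᶜ := by
          have := measure_compl hG.measurableSet.compl (measure_ne_top (μs n) _)
          rwa [compl_compl] at this
        rw [hG']
        exact tsub_le_tsub hn1.le hn2.le
      have hlb : (μ Set.univ - η) - (μ Gᶜ + η) ≤ atTop.liminf fun n => μs n G :=
        le_liminf_of_le (by isBoundedDefault) key
      have hμG : μ G = μ Set.univ - μ Gᶜ := by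
        have := measure_compl hG.measurableSet.compl (measure_ne_top μ _)
        rwa [compl_compl] at this
      set A := μ Set.univ
      set B := μ Gᶜ
      set X := (A - η) - (B + η) with hX
      have step : A - B ≤ X + (ε : ℝ≥0∞) := by
        rw [← hηε]
        rw [tsub_le_iff_right]
        calc A ≤ (A - η) + η := le_tsub_add
          _ ≤ (X + (B + η)) + η := add_le_add_left le_tsub_add _
          _ = X + (η + η) + B := by ring
      calc μ G = A - B := hμG
        _ ≤ X + (ε : ℝ≥0∞) := step
        _ ≤ (atTop.liminf fun n => μs n G) + ε := add_le_add_left hlb _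
  exact tendsto_measure_of_le_liminf_measure_of_limsup_measure_le
    interior_subset subset_closure hfr (hO _ isOpen_interior) (hC _ isClosed_closure)

end Aux

noncomputable section Cover

/-- A finite a.e.-continuity partition covering a compact set by small pieces. -/
lemma aux_exists_partition {d : ℕ} (μ : Measure (Euc d)) [IsFiniteMeasure μ]
    {K : Set (Euc d)} (hK : IsCompact K) {δ : ℝ} (hδ : 0 < δ) :
    ∃ (N : ℕ) (c : ℕ → Euc d) (Q : ℕ → Set (Euc d)),
      (∀ i, MeasurableSet (Q i)) ∧ Pairwise (Function.onFun Disjoint Q) ∧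
      (∀ i, μ (frontier (Q i)) = 0) ∧ (∀ i, Q i ⊆ Metric.ball (c i) δ) ∧
      K ⊆ ⋃ i ∈ Finset.range N, Q i := by
  classical
  have hballs : ∀ x : Euc d, ∃ r : ℝ, r ∈ Set.Ioo (δ / 2) δ ∧
      μ (frontier (Metric.ball x r)) = 0 := by
    intro x
    obtain ⟨r, hr, hr0⟩ := MeasureTheory.exists_null_frontier_thickening μ {x} (half_lt_self hδ)
    exact ⟨r, hr, by rwa [Metric.thickening_singleton] at hr0⟩
  choose r hr hr0 using hballs
  obtain ⟨t, ht⟩ := hK.elim_finite_subcover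
    (fun x : K => Metric.ball (x : Euc d) (r x))
    (fun x => Metric.isOpen_ball)
    (fun x hx => Set.mem_iUnion.2
      ⟨⟨x, hx⟩, Metric.mem_ball_self (lt_trans (half_pos hδ) (hr _).1)⟩)
  set N := t.card with hN
  set y : ℕ → Euc d := fun i => if h : i < N then ((t.equivFin.symm ⟨i, h⟩ : t) : Euc d) else 0
    with hy
  set B : ℕ → Set (Euc d) := fun i =>
    if i < N then Metric.ball (y i) (r (y i)) else ∅ with hB
  have hcover : K ⊆ ⋃ i, B i := by
    intro x hx
    obtain ⟨z, hzt, hz⟩ := Set.mem_iUnion₂.1 (ht hx)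
    set i : Fin N := t.equivFin ⟨z, hzt⟩ with hi
    refine Set.mem_iUnion.2 ⟨(i : ℕ), ?_⟩
    have hyi : y (i : ℕ) = (z : Euc d) := by
      rw [hy]
      simp only [i.isLt, dif_pos]
      congr 1
      rw [hi]
      simp [Fin.eta]
    rw [hB]
    simp only [i.isLt, if_pos]
    rw [hyi]
    exact hz
  have hBfr : ∀ i, μ (frontier (B i)) = 0 := by
    intro i
    by_cases h : i < N
    · simp only [hB, if_pos h]; exact hr0 _
    · simp [hB, h]
  have hBmeas : ∀ i, MeasurableSet (B i) := by
    intro i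
    by_cases h : i < N
    · simp only [hB, if_pos h]; exact measurableSet_ball
    · simp [hB, h]
  refine ⟨N, y, disjointed B, fun i => MeasurableSet.disjointed hBmeas i,
    disjoint_disjointed B, ?_, ?_, ?_⟩
  · -- frontier null
    have hPS : ∀ n, μ (frontier ((partialSups B n : Set (Euc d)))) = 0 := by
      intro n
      induction n with
      | zero => simpa using hBfr 0
      | succ n ih =>
        rw [show (n + 1 : ℕ) = Order.succ n from rfl, partialSups_succ]
        refine measure_mono_null ((frontier_union_subset _ _).trans
          (Set.union_subset_union Set.inter_subset_left Set.inter_subset_right))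
          (measure_union_null ih (hBfr (n + 1)))
    intro i
    cases i with
    | zero => simpa using hBfr 0
    | succ n =>
      rw [show (n + 1 : ℕ) = Order.succ n from rfl, disjointed_succ _ (not_isMax n)]
      have hsub : frontier ((B (n + 1) : Set (Euc d)) \ (partialSups B n : Set (Euc d))) ⊆
          frontier (B (n + 1)) ∪ frontier ((partialSups B n : Set (Euc d))) := by
        rw [Set.diff_eq]
        refine (frontier_inter_subset _ _).trans ?_
        rw [frontier_compl]
        exact Set.union_subset_union Set.inter_subset_left Set.inter_subset_right
      exact measure_mono_null hsub (measure_union_null (hBfr _) (hPS n))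
  · -- small
    intro i
    refine (disjointed_le B i).trans ?_
    by_cases h : i < N
    · simp only [hB, if_pos h]
      exact Metric.ball_subset_ball (hr (y i)).2.le
    · simp [hB, h]
  · -- covers
    intro x hx
    have hx' : x ∈ ⋃ i, disjointed B i := by
      rw [iUnion_disjointed]; exact hcover hx
    obtain ⟨i, hiQ⟩ := Set.mem_iUnion.1 hx'
    have hiN : i < N := by
      by_contra h
      have : disjointed B i ⊆ B i := disjointed_le B i
      rw [hB] at this
      simp only [if_neg h] at this
      exact this hiQ
    exact Set.mem_biUnion (Finset.mem_range.2 hiN) hiQ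

end Cover

noncomputable section Key

open Finset in
lemma aux_key_estimate {d : ℕ} (a b p : ℝ) (hp : 1 ≤ p) (ha : 0 < a) (hb : 0 < b)
    (X Y : Measure (Euc d)) [IsFiniteMeasure X] [IsFiniteMeasure Y]
    (N : ℕ) (c : ℕ → Euc d) (Q : ℕ → Set (Euc d)) {δ : ℝ} (hδ : 0 < δ)
    (hmeas : ∀ i, MeasurableSet (Q i)) (hdisj : Pairwise (Function.onFun Disjoint Q))
    (hball : ∀ i, Q i ⊆ Metric.ball (c i) δ) :
    ∃ r ∈ gwSet a b p X Y,
      r ≤ a * ((X (⋃ i ∈ Finset.range N, Q i)ᶜ).toReal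
              + ∑ i ∈ Finset.range N, |(X (Q i)).toReal - (Y (Q i)).toReal|)
        + a * ((Y (⋃ i ∈ Finset.range N, Q i)ᶜ).toReal
              + ∑ i ∈ Finset.range N, |(X (Q i)).toReal - (Y (Q i)).toReal|)
        + b * (2 * δ * (Y Set.univ).toReal ^ (1 / p)) := by
  classical
  have hp0 : (0 : ℝ) < p := lt_of_lt_of_le one_pos hp
  set U : Set (Euc d) := ⋃ i ∈ Finset.range N, Q i with hUdef
  have hUmeas : MeasurableSet U := Finset.measurableSet_biUnion _ (fun i _ => hmeas i)
  set m : ℕ → ℝ≥0∞ := fun i => min (X (Q i)) (Y (Q i)) with hmdef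
  have hmX : ∀ i, m i ≤ X (Q i) := fun i => min_le_left _ _
  have hmY : ∀ i, m i ≤ Y (Q i) := fun i => min_le_right _ _
  have hmtop : ∀ i, m i ≠ ⊤ := fun i => ((hmX i).trans_lt (measure_lt_top X _)).ne
  have hdisj' : ((Finset.range N : Finset ℕ) : Set ℕ).PairwiseDisjoint Q :=
    fun i _ j _ hij => hdisj hij
  set Xi : ℕ → Measure (Euc d) := fun i => (m i / X (Q i)) • X.restrict (Q i) with hXidef
  set Yi : ℕ → Measure (Euc d) := fun i => (m i / Y (Q i)) • Y.restrict (Q i) with hYidef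
  set μ' : Measure (Euc d) := ∑ i ∈ Finset.range N, Xi i with hμ'def
  set ν' : Measure (Euc d) := ∑ i ∈ Finset.range N, Yi i with hν'def
  have happX : ∀ s : Set (Euc d), MeasurableSet s →
      μ' s = ∑ i ∈ Finset.range N, (m i / X (Q i)) * X (s ∩ Q i) := by
    intro s hs
    rw [hμ'def, Measure.finset_sum_apply]
    exact Finset.sum_congr rfl fun i _ => by
      rw [hXidef, Measure.smul_apply, Measure.restrict_apply hs, smul_eq_mul]
  have happY : ∀ s : Set (Euc d), MeasurableSet s →
      ν' s = ∑ i ∈ Finset.range N, (m i / Y (Q i)) * Y (s ∩ Q i) := by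
    intro s hs
    rw [hν'def, Measure.finset_sum_apply]
    exact Finset.sum_congr rfl fun i _ => by
      rw [hYidef, Measure.smul_apply, Measure.restrict_apply hs, smul_eq_mul]
  have hμ'univ : μ' Set.univ = ∑ i ∈ Finset.range N, m i := by
    rw [happX _ MeasurableSet.univ]
    exact Finset.sum_congr rfl fun i _ => by
      rw [Set.univ_inter]; exact aux_div_mul_cancel (hmX i) (measure_ne_top X _)
  have hν'univ : ν' Set.univ = ∑ i ∈ Finset.range N, m i := by
    rw [happY _ MeasurableSet.univ]
    exact Finset.sum_congr rfl fun i _ => by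
      rw [Set.univ_inter]; exact aux_div_mul_cancel (hmY i) (measure_ne_top Y _)
  have hsumm_top : (∑ i ∈ Finset.range N, m i) ≠ ⊤ :=
    (ENNReal.sum_lt_top.2 fun i _ => (hmtop i).lt_top).ne
  haveI hfinμ' : IsFiniteMeasure μ' := ⟨by rw [hμ'univ]; exact hsumm_top.lt_top⟩
  haveI hfinν' : IsFiniteMeasure ν' := ⟨by rw [hν'univ]; exact hsumm_top.lt_top⟩
  -- μ' ≤ X
  have hle : μ' ≤ X := by
    rw [Measure.le_iff]
    intro s hs
    rw [happX s hs]
    calc ∑ i ∈ Finset.range N, (m i / X (Q i)) * X (s ∩ Q i)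
        ≤ ∑ i ∈ Finset.range N, X (s ∩ Q i) := by
          refine Finset.sum_le_sum fun i _ => ?_
          calc (m i / X (Q i)) * X (s ∩ Q i) ≤ 1 * X (s ∩ Q i) :=
            mul_le_mul_left (aux_div_le_one (hmX i)) _
          _ = X (s ∩ Q i) := one_mul _
      _ = X (⋃ i ∈ Finset.range N, s ∩ Q i) :=
          (measure_biUnion_finset
            (fun i hi j hj hij => ((hdisj hij).mono Set.inter_subset_right
              Set.inter_subset_right))
            (fun i _ => hs.inter (hmeas i))).symm
      _ ≤ X s := measure_mono (Set.iUnion₂_subset fun i _ => Set.inter_subset_left)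
  have hleY : ν' ≤ Y := by
    rw [Measure.le_iff]
    intro s hs
    rw [happY s hs]
    calc ∑ i ∈ Finset.range N, (m i / Y (Q i)) * Y (s ∩ Q i)
        ≤ ∑ i ∈ Finset.range N, Y (s ∩ Q i) := by
          refine Finset.sum_le_sum fun i _ => ?_
          calc (m i / Y (Q i)) * Y (s ∩ Q i) ≤ 1 * Y (s ∩ Q i) :=
            mul_le_mul_left (aux_div_le_one (hmY i)) _
          _ = Y (s ∩ Q i) := one_mul _
      _ = Y (⋃ i ∈ Finset.range N, s ∩ Q i) :=
          (measure_biUnion_finset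
            (fun i hi j hj hij => ((hdisj hij).mono Set.inter_subset_right
              Set.inter_subset_right))
            (fun i _ => hs.inter (hmeas i))).symm
      _ ≤ Y s := measure_mono (Set.iUnion₂_subset fun i _ => Set.inter_subset_left)
  -- tvDist computations
  have habs : ∀ (Z : Measure (Euc d)), ∀ i, (Z = X ∨ Z = Y) →
      (Z (Q i) - m i).toReal ≤ |(X (Q i)).toReal - (Y (Q i)).toReal| := by
    have hmin : ∀ i, (m i).toReal = min (X (Q i)).toReal (Y (Q i)).toReal := by
      intro i
      rw [hmdef]; exact ENNReal.toReal_min (measure_ne_top X _) (measure_ne_top Y _)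
    intro Z i hZ
    rcases hZ with rfl | rfl
    · rw [ENNReal.toReal_sub_of_le (hmX i) (measure_ne_top Z _), hmin i]
      rcases le_total ((Z (Q i)).toReal) ((Y (Q i)).toReal) with h | h
      · rw [min_eq_left h]; simp [abs_nonneg]
      · rw [min_eq_right h]; exact le_abs_self _
    · rw [ENNReal.toReal_sub_of_le (hmY i) (measure_ne_top Z _), hmin i]
      rcases le_total ((X (Q i)).toReal) ((Z (Q i)).toReal) with h | h
      · rw [min_eq_left h, abs_sub_comm]; exact le_abs_self _
      · rw [min_eq_right h]; simp [abs_nonneg]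
  -- the actual tv bound, done for each side
  have htvbound : ∀ (Z ρ : Measure (Euc d)) (inst : IsFiniteMeasure Z)
      (instρ : IsFiniteMeasure ρ), ∀ (hρZ : ρ ≤ Z)
      (hρuniv : ρ Set.univ = ∑ i ∈ Finset.range N, m i)
      (hmZ : ∀ i, m i ≤ Z (Q i))
      (habsZ : ∀ i ∈ Finset.range N,
        (Z (Q i) - m i).toReal ≤ |(X (Q i)).toReal - (Y (Q i)).toReal|),
      tvDist Z ρ ≤ (Z Uᶜ).toReal
        + ∑ i ∈ Finset.range N, |(X (Q i)).toReal - (Y (Q i)).toReal| := by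
    intro Z ρ inst instρ hρZ hρuniv hmZ habsZ
    have hρuniv_le : ρ Set.univ ≤ Z Set.univ := Measure.le_iff'.mp hρZ Set.univ
    have htv1 : tvDist Z ρ = (Z Set.univ - ρ Set.univ).toReal := by
      rw [tvDist, Measure.sub_eq_zero_of_le hρZ, Measure.sub_apply MeasurableSet.univ hρZ]
      simp
    have hsplit : Z Set.univ = (∑ i ∈ Finset.range N, m i)
        + (Z Uᶜ + ∑ i ∈ Finset.range N, (Z (Q i) - m i)) := by
      have h1 : Z U + Z Uᶜ = Z Set.univ := measure_add_measure_compl hUmeas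
      have h2 : Z U = ∑ i ∈ Finset.range N, Z (Q i) := by
        rw [hUdef]
        exact measure_biUnion_finset hdisj' (fun i _ => hmeas i)
      have h3 : ∑ i ∈ Finset.range N, Z (Q i)
          = (∑ i ∈ Finset.range N, m i) + ∑ i ∈ Finset.range N, (Z (Q i) - m i) := by
        rw [← Finset.sum_add_distrib]
        refine Finset.sum_congr rfl fun i _ => ?_
        rw [add_comm, tsub_add_cancel_of_le (hmZ i)]
      rw [← h1, h2, h3]
      ring
    have hsub : Z Set.univ - ρ Set.univ
        = Z Uᶜ + ∑ i ∈ Finset.range N, (Z (Q i) - m i) := by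
      rw [hρuniv, hsplit, ENNReal.add_sub_cancel_left hsumm_top]
    rw [htv1, hsub, ENNReal.toReal_add (measure_ne_top Z _)
        (ENNReal.sum_lt_top.2 fun i _ =>
          ((tsub_le_self (b := m i)).trans_lt (measure_lt_top Z _))).ne,
      ENNReal.toReal_sum (fun i _ =>
          ((tsub_le_self (b := m i)).trans_lt (measure_lt_top Z _)).ne)]
    exact add_le_add_right (Finset.sum_le_sum habsZ) _
  have htvX : tvDist X μ' ≤ (X Uᶜ).toReal
      + ∑ i ∈ Finset.range N, |(X (Q i)).toReal - (Y (Q i)).toReal| :=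
    htvbound X μ' inferInstance hfinμ' hle hμ'univ hmX
      (fun i _ => habs X i (Or.inl rfl))
  have htvY : tvDist Y ν' ≤ (Y Uᶜ).toReal
      + ∑ i ∈ Finset.range N, |(X (Q i)).toReal - (Y (Q i)).toReal| :=
    htvbound Y ν' inferInstance hfinν' hleY hν'univ hmY
      (fun i _ => habs Y i (Or.inr rfl))
  -- finite moments
  have hmom : ∀ (Z : Measure (Euc d)) (inst : IsFiniteMeasure Z) (coef : ℕ → ℝ≥0∞),
      (∀ i, coef i ≤ 1) →
      FinMom p (∑ i ∈ Finset.range N, coef i • Z.restrict (Q i)) := by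
    intro Z inst coef hcoef
    unfold FinMom
    rw [lintegral_finset_sum_measure]
    refine ENNReal.sum_lt_top.2 fun i _ => ?_
    rw [lintegral_smul_measure]
    have hbd : ∫⁻ x in Q i, ENNReal.ofReal (‖x‖ ^ p) ∂Z
        ≤ ENNReal.ofReal ((‖c i‖ + δ) ^ p) * Z (Q i) := by
      calc ∫⁻ x in Q i, ENNReal.ofReal (‖x‖ ^ p) ∂Z
          ≤ ∫⁻ _x in Q i, ENNReal.ofReal ((‖c i‖ + δ) ^ p) ∂Z := by
            refine setLIntegral_mono' (hmeas i) fun x hx => ?_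
            refine ENNReal.ofReal_le_ofReal
              (Real.rpow_le_rpow (norm_nonneg x) ?_ hp0.le)
            have hb := hball i hx
            rw [Metric.mem_ball] at hb
            have h1 : dist x 0 ≤ dist x (c i) + dist (c i) 0 := dist_triangle _ _ _
            rw [dist_zero_right] at h1
            rw [← dist_zero_right]
            have h2 : dist (c i) 0 = ‖c i‖ := dist_zero_right _
            rw [dist_zero_right] at h1 ⊢
            linarith
        _ = ENNReal.ofReal ((‖c i‖ + δ) ^ p) * Z (Q i) := setLIntegral_const _ _
    calc coef i * ∫⁻ x in Q i, ENNReal.ofReal (‖x‖ ^ p) ∂Z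
        ≤ 1 * (ENNReal.ofReal ((‖c i‖ + δ) ^ p) * Z (Q i)) := mul_le_mul' (hcoef i) hbd
      _ < ⊤ := by
          rw [one_mul]
          exact ENNReal.mul_lt_top ENNReal.ofReal_lt_top (measure_lt_top Z _)
  have hmomX : FinMom p μ' := by
    rw [hμ'def]
    simp only [hXidef]
    exact hmom X inferInstance _ (fun i => aux_div_le_one (hmX i))
  have hmomY : FinMom p ν' := by
    rw [hν'def]
    simp only [hYidef]
    exact hmom Y inferInstance _ (fun i => aux_div_le_one (hmY i))
  -- scalar identities
  set sc : ℕ → ℝ≥0∞ := fun i => (m i)⁻¹ * (m i / X (Q i)) * (m i / Y (Q i)) with hscdef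
  have hscalar1 : ∀ i, sc i * Y (Q i) = m i / X (Q i) := by
    intro i
    rcases eq_or_ne (m i) 0 with h0 | h0
    · simp [hscdef, h0, ENNReal.zero_div]
    · rw [hscdef, mul_assoc, aux_div_mul_cancel (hmY i) (measure_ne_top Y _),
        mul_right_comm, ENNReal.inv_mul_cancel h0 (hmtop i), one_mul]
  have hscalar2 : ∀ i, sc i * X (Q i) = m i / Y (Q i) := by
    intro i
    rcases eq_or_ne (m i) 0 with h0 | h0
    · simp [hscdef, h0, ENNReal.zero_div]
    · rw [hscdef, mul_right_comm, mul_assoc ((m i)⁻¹),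
        aux_div_mul_cancel (hmX i) (measure_ne_top X _),
        ENNReal.inv_mul_cancel h0 (hmtop i), one_mul]
  have hscalar3 : ∀ i, sc i * (X (Q i) * Y (Q i)) ≤ m i := by
    intro i
    rw [← mul_assoc, hscalar2 i, aux_div_mul_cancel (hmY i) (measure_ne_top Y _)]
  -- the transference plan
  set π : Measure (Euc d × Euc d) :=
    ∑ i ∈ Finset.range N, sc i • ((X.restrict (Q i)).prod (Y.restrict (Q i))) with hπdef
  have hπfst : π.map Prod.fst = μ' := by
    rw [hπdef, aux_map_finset_sum measurable_fst, hμ'def]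
    refine Finset.sum_congr rfl fun i _ => ?_
    rw [Measure.map_smul, Measure.map_fst_prod, Measure.restrict_apply_univ,
      smul_smul, hscalar1 i, hXidef]
  have hπsnd : π.map Prod.snd = ν' := by
    rw [hπdef, aux_map_finset_sum measurable_snd, hν'def]
    refine Finset.sum_congr rfl fun i _ => ?_
    rw [Measure.map_smul, Measure.map_snd_prod, Measure.restrict_apply_univ,
      smul_smul, hscalar2 i, hYidef]
  -- cost bound
  have hsummY : (∑ i ∈ Finset.range N, m i) ≤ Y Set.univ := by
    calc (∑ i ∈ Finset.range N, m i) ≤ ∑ i ∈ Finset.range N, Y (Q i) :=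
        Finset.sum_le_sum fun i _ => hmY i
      _ = Y U := (measure_biUnion_finset hdisj' (fun i _ => hmeas i)).symm
      _ ≤ Y Set.univ := measure_mono (Set.subset_univ _)
  have hcost : Wcost p π ≤ ENNReal.ofReal ((2 * δ) ^ p) * Y Set.univ := by
    rw [Wcost, hπdef, lintegral_finset_sum_measure]
    have hterm : ∀ i ∈ Finset.range N,
        (∫⁻ z, ENNReal.ofReal (dist z.1 z.2 ^ p)
          ∂(sc i • ((X.restrict (Q i)).prod (Y.restrict (Q i)))))
        ≤ ENNReal.ofReal ((2 * δ) ^ p) * m i := by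
      intro i _
      rw [lintegral_smul_measure, Measure.prod_restrict]
      have hsetb : (∫⁻ z in Q i ×ˢ Q i, ENNReal.ofReal (dist z.1 z.2 ^ p) ∂(X.prod Y))
          ≤ ENNReal.ofReal ((2 * δ) ^ p) * (X (Q i) * Y (Q i)) := by
        calc (∫⁻ z in Q i ×ˢ Q i, ENNReal.ofReal (dist z.1 z.2 ^ p) ∂(X.prod Y))
            ≤ ∫⁻ _z in Q i ×ˢ Q i, ENNReal.ofReal ((2 * δ) ^ p) ∂(X.prod Y) := by
              refine setLIntegral_mono' ((hmeas i).prod (hmeas i)) fun z hz => ?_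
              refine ENNReal.ofReal_le_ofReal
                (Real.rpow_le_rpow dist_nonneg ?_ hp0.le)
              have hz1 := hball i hz.1
              have hz2 := hball i hz.2
              rw [Metric.mem_ball] at hz1 hz2
              have htri : dist z.1 z.2 ≤ dist z.1 (c i) + dist (c i) z.2 :=
                dist_triangle _ _ _
              rw [dist_comm (c i) z.2] at htri
              linarith
          _ = ENNReal.ofReal ((2 * δ) ^ p) * (X.prod Y) (Q i ×ˢ Q i) :=
              setLIntegral_const _ _
          _ = ENNReal.ofReal ((2 * δ) ^ p) * (X (Q i) * Y (Q i)) := by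
              rw [Measure.prod_prod]
      calc sc i * ∫⁻ z in Q i ×ˢ Q i, ENNReal.ofReal (dist z.1 z.2 ^ p) ∂(X.prod Y)
          ≤ sc i * (ENNReal.ofReal ((2 * δ) ^ p) * (X (Q i) * Y (Q i))) :=
            mul_le_mul_right hsetb _
        _ = ENNReal.ofReal ((2 * δ) ^ p) * (sc i * (X (Q i) * Y (Q i))) := by ring
        _ ≤ ENNReal.ofReal ((2 * δ) ^ p) * m i := mul_le_mul_right (hscalar3 i) _
    calc (∑ i ∈ Finset.range N, ∫⁻ z, ENNReal.ofReal (dist z.1 z.2 ^ p)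
          ∂(sc i • ((X.restrict (Q i)).prod (Y.restrict (Q i)))))
        ≤ ∑ i ∈ Finset.range N, ENNReal.ofReal ((2 * δ) ^ p) * m i :=
          Finset.sum_le_sum hterm
      _ = ENNReal.ofReal ((2 * δ) ^ p) * ∑ i ∈ Finset.range N, m i := by
          rw [Finset.mul_sum]
      _ ≤ ENNReal.ofReal ((2 * δ) ^ p) * Y Set.univ := mul_le_mul_right hsummY _
  -- Wasserstein bound
  have hδ2 : (0:ℝ) ≤ 2 * δ := by positivity
  have hWple : Wp p μ' ν' ≤ 2 * δ * (Y Set.univ).toReal ^ (1 / p) := by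
    have hmem : Wcost p π ∈ Wcost p '' {π' | IsPlan π' μ' ν'} :=
      ⟨π, ⟨hπfst, hπsnd⟩, rfl⟩
    have h1 : sInf (Wcost p '' {π' | IsPlan π' μ' ν'})
        ≤ ENNReal.ofReal ((2 * δ) ^ p) * Y Set.univ := (sInf_le hmem).trans hcost
    have h2 : sInf (Wcost p '' {π' | IsPlan π' μ' ν'}) ^ (1 / p)
        ≤ (ENNReal.ofReal ((2 * δ) ^ p) * Y Set.univ) ^ (1 / p) :=
      ENNReal.rpow_le_rpow h1 (by positivity)
    have hne : (ENNReal.ofReal ((2 * δ) ^ p) * Y Set.univ) ^ (1 / p) ≠ ⊤ :=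
      ENNReal.rpow_ne_top_of_nonneg (by positivity)
        (ENNReal.mul_ne_top ENNReal.ofReal_ne_top (measure_ne_top Y _))
    calc Wp p μ' ν'
        ≤ ((ENNReal.ofReal ((2 * δ) ^ p) * Y Set.univ) ^ (1 / p)).toReal :=
          ENNReal.toReal_mono hne h2
      _ = 2 * δ * (Y Set.univ).toReal ^ (1 / p) := by
          rw [ENNReal.mul_rpow_of_nonneg _ _ (by positivity : (0:ℝ) ≤ 1 / p),
            ENNReal.ofReal_rpow_of_nonneg (by positivity) (by positivity),
            ← Real.rpow_mul hδ2, mul_one_div_cancel hp0.ne', Real.rpow_one,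
            ENNReal.toReal_mul, ENNReal.toReal_ofReal hδ2, ← ENNReal.toReal_rpow]
  refine ⟨a * tvDist X μ' + a * tvDist Y ν' + b * Wp p μ' ν',
    ⟨μ', ν', hfinμ', hfinν', hmomX, hmomY, hμ'univ.trans hν'univ.symm, rfl⟩, ?_⟩
  exact add_le_add (add_le_add (mul_le_mul_of_nonneg_left htvX ha.le)
    (mul_le_mul_of_nonneg_left htvY ha.le)) (mul_le_mul_of_nonneg_left hWple hb.le)

end Key

theorem gw_tendsto_zero_of_weakConv_tight {d : ℕ} (hd : 1 ≤ d) (a b p : ℝ) (hp : 1 ≤ p) (ha : 0 < a) (hb : 0 < b)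
    (μs : ℕ → Measure (Euc d)) (μ : Measure (Euc d))
    (hfin : ∀ n, IsFiniteMeasure (μs n)) [IsFiniteMeasure μ]
    (hconv : WeakConv μs μ) (htight : Tight (Set.range μs)) :
    Tendsto (fun n => GW a b p (μs n) μ) atTop (𝓝 0) := by
  have hp0 : (0 : ℝ) < p := lt_of_lt_of_le one_pos hp
  have hnn : ∀ n, ∀ r ∈ gwSet a b p (μs n) μ, (0:ℝ) ≤ r := by
    rintro n r ⟨μ', ν', h1, h2, h3, h4, h5, rfl⟩
    have h6 : 0 ≤ tvDist (μs n) μ' := ENNReal.toReal_nonneg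
    have h7 : 0 ≤ tvDist μ ν' := ENNReal.toReal_nonneg
    have h8 : 0 ≤ Wp p μ' ν' := ENNReal.toReal_nonneg
    have := add_nonneg (add_nonneg (mul_nonneg ha.le h6) (mul_nonneg ha.le h7))
      (mul_nonneg hb.le h8)
    linarith
  have hGW0 : ∀ n, 0 ≤ GW a b p (μs n) μ := fun n => Real.sInf_nonneg (hnn n)
  refine tendsto_order.2 ⟨fun x hx => Eventually.of_forall
    fun n => lt_of_lt_of_le hx (hGW0 n), fun ε hε => ?_⟩
  -- constants
  set TR : ℝ := (μ Set.univ).toReal ^ (1 / p) with hTRdef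
  have hTR0 : 0 ≤ TR := Real.rpow_nonneg ENNReal.toReal_nonneg _
  set ε₁ : ℝ := ε / (16 * (a + 1)) with hε₁def
  have hε₁pos : 0 < ε₁ := by rw [hε₁def]; positivity
  set δ : ℝ := ε / (8 * b * (TR + 1)) with hδdef
  have hδpos : 0 < δ := by rw [hδdef]; positivity
  have hWbd : b * (2 * δ * TR) ≤ ε / 4 := by
    have hden : (0:ℝ) < 8 * b * (TR + 1) := by positivity
    have heq : b * (2 * δ * TR) = (2 * b * TR * ε) / (8 * b * (TR + 1)) := by
      rw [hδdef]; ring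
    rw [heq, div_le_div_iff₀ hden (by norm_num : (0:ℝ) < 4)]
    nlinarith [mul_nonneg (mul_nonneg hb.le hTR0) hε.le, mul_nonneg hb.le hε.le]
  have hε₁bd : 4 * (a * ε₁) ≤ ε / 4 := by
    rw [hε₁def, show 4 * (a * (ε / (16 * (a + 1)))) = (4 * a * ε) / (16 * (a + 1)) by ring,
      div_le_div_iff₀ (by positivity : (0:ℝ) < 16 * (a + 1)) (by norm_num : (0:ℝ) < 4)]
    nlinarith [hε.le, ha.le, mul_nonneg ha.le hε.le]
  -- tightness: compact set for all measures
  obtain ⟨K₁, hK₁c, hK₁⟩ := htight ε₁ hε₁pos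
  have hμsK₁ : ∀ n, μs n K₁ᶜ < ENNReal.ofReal ε₁ := fun n => hK₁ _ ⟨n, rfl⟩
  obtain ⟨R, hR⟩ : ∃ R : ℕ, μ (Metric.closedBall (0 : Euc d) R)ᶜ < ENNReal.ofReal ε₁ := by
    have hmono : Antitone (fun R : ℕ => (Metric.closedBall (0 : Euc d) R)ᶜ) :=
      fun i j hij => Set.compl_subset_compl.2
        (Metric.closedBall_subset_closedBall (Nat.cast_le.2 hij))
    have hiInter : ⋂ R : ℕ, (Metric.closedBall (0 : Euc d) (R : ℝ))ᶜ = ∅ := by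
      ext x
      simp only [Set.mem_iInter, Set.mem_compl_iff, Metric.mem_closedBall,
        Set.mem_empty_iff_false, iff_false, not_forall, not_not]
      obtain ⟨n, hn⟩ := exists_nat_ge (dist x 0)
      exact ⟨n, hn⟩
    have htd := MeasureTheory.tendsto_measure_iInter_atTop (μ := μ)
      (s := fun R : ℕ => (Metric.closedBall (0 : Euc d) (R : ℝ))ᶜ)
      (fun R => measurableSet_closedBall.compl.nullMeasurableSet)
      hmono ⟨0, measure_ne_top μ _⟩
    rw [hiInter] at htd
    simp only [measure_empty] at htd
    have hev := htd.eventually_lt_const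
      (show (0:ℝ≥0∞) < ENNReal.ofReal ε₁ by simp [ENNReal.ofReal_pos, hε₁pos])
    exact hev.exists
  set K : Set (Euc d) := K₁ ∪ Metric.closedBall (0 : Euc d) R with hKdef
  have hKc : IsCompact K := hK₁c.union (isCompact_closedBall _ _)
  have hμsK : ∀ n, μs n Kᶜ < ENNReal.ofReal ε₁ := fun n =>
    lt_of_le_of_lt (measure_mono (Set.compl_subset_compl.2 Set.subset_union_left)) (hμsK₁ n)
  have hμK : μ Kᶜ < ENNReal.ofReal ε₁ :=
    lt_of_le_of_lt (measure_mono (Set.compl_subset_compl.2 Set.subset_union_right)) hR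
  -- the partition
  obtain ⟨N, c, Q, hQmeas, hQdisj, hQfr, hQball, hKQ⟩ := aux_exists_partition μ hKc hδpos
  -- convergence of cell measures
  have hcell : ∀ i, Tendsto (fun n => (μs n (Q i)).toReal) atTop (𝓝 ((μ (Q i)).toReal)) :=
    fun i => (ENNReal.tendsto_toReal (measure_ne_top μ _)).comp
      (aux_tendsto_measure μs μ hfin hconv (hQfr i))
  have hsum_ev : ∀ᶠ n in atTop,
      (∑ i ∈ Finset.range N, |(μs n (Q i)).toReal - (μ (Q i)).toReal|) < ε₁ := by
    have habs0 : ∀ i, Tendsto (fun n => |(μs n (Q i)).toReal - (μ (Q i)).toReal|)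
        atTop (𝓝 0) := by
      intro i
      have h0 : Tendsto (fun n => ((μs n) (Q i)).toReal - (μ (Q i)).toReal) atTop
          (𝓝 (((μ (Q i)).toReal) - (μ (Q i)).toReal)) :=
        (hcell i).sub tendsto_const_nhds
      have h1 := h0.abs
      simpa using h1
    have hsum : Tendsto (fun n => ∑ i ∈ Finset.range N,
        |(μs n (Q i)).toReal - (μ (Q i)).toReal|) atTop (𝓝 0) := by
      have := tendsto_finset_sum (Finset.range N) (fun i _ => habs0 i)
      simpa using this
    exact hsum.eventually_lt_const hε₁pos
  -- conclude
  filter_upwards [hsum_ev] with n hn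
  haveI := hfin n
  obtain ⟨r, hrmem, hrle⟩ := aux_key_estimate a b p hp ha hb (μs n) μ N c Q hδpos
    hQmeas hQdisj hQball
  have hbdd : BddBelow (gwSet a b p (μs n) μ) := ⟨0, fun r' hr' => hnn n r' hr'⟩
  have hGWr : GW a b p (μs n) μ ≤ r := csInf_le hbdd hrmem
  have hUc : (⋃ i ∈ Finset.range N, Q i)ᶜ ⊆ Kᶜ := Set.compl_subset_compl.2 hKQ
  have f1 : ((μs n) (⋃ i ∈ Finset.range N, Q i)ᶜ).toReal < ε₁ :=
    ENNReal.toReal_lt_of_lt_ofReal (lt_of_le_of_lt (measure_mono hUc) (hμsK n))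
  have f2 : (μ (⋃ i ∈ Finset.range N, Q i)ᶜ).toReal < ε₁ :=
    ENNReal.toReal_lt_of_lt_ofReal (lt_of_le_of_lt (measure_mono hUc) hμK)
  have g1 : a * (((μs n) (⋃ i ∈ Finset.range N, Q i)ᶜ).toReal
      + ∑ i ∈ Finset.range N, |((μs n) (Q i)).toReal - (μ (Q i)).toReal|)
      ≤ a * (ε₁ + ε₁) :=
    mul_le_mul_of_nonneg_left (by linarith) ha.le
  have g2 : a * ((μ (⋃ i ∈ Finset.range N, Q i)ᶜ).toReal
      + ∑ i ∈ Finset.range N, |((μs n) (Q i)).toReal - (μ (Q i)).toReal|)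
      ≤ a * (ε₁ + ε₁) :=
    mul_le_mul_of_nonneg_left (by linarith) ha.le
  have hW : b * (2 * δ * (μ Set.univ).toReal ^ (1 / p)) ≤ ε / 4 := by
    rw [← hTRdef]; exact hWbd
  linarith [hrle, hGWr, hε₁bd, hW, g1, g2]
end
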